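/- arXiv:1401.0409 — 2 statements merged into one kernel-verified Lean document; each statement's English description precedes it below -/
import Mathlib

section
/- Assume min{α, βα} > d and d ≥ 2. Then the critical value λ_c(α) is finite, i.e. there exists λ ∈ (0,∞) with θ(λ,α) > 0. -/
open MeasureTheory ProbabilityTheory Real Set

namespace InhomLRP

/-- Vertices of the lattice `ℤ^d`. -/
abbrev V (d : ℕ) := Fin d → ℤ

/-- Euclidean distance between two vertices of `ℤ^d`. -/
noncomputable def edist {d : ℕ} (x y : V d) : ℝ :=
  Real.sqrt (∑ i, ((x i : ℝ) - (y i : ℝ)) ^ 2)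

/-- The inhomogeneous long-range percolation model on `ℤ^d` with weight tail parameter `β`.
It is realized by i.i.d. Pareto(1,β) weights `W x` and, independently of everything else,
i.i.d. uniform-[0,1] variables `U e` attached to the (unordered) edges; for parameters
`lam > 0` and `α > 0` the edge `(x,y)` is occupied iff
`U ⟦(x,y)⟧ ≤ 1 - exp(-lam * W x * W y / |x-y|^α)`, which produces exactly the
conditionally independent edge percolation with the prescribed probabilities. -/
structure Model (d : ℕ) (β : ℝ) where
  Ω : Type
  mΩ : MeasurableSpace Ω
  μ : Measure Ω
  hprob : IsProbabilityMeasure μ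
  W : V d → Ω → ℝ
  U : Sym2 (V d) → Ω → ℝ
  hW_meas : ∀ x, Measurable (W x)
  hU_meas : ∀ e, Measurable (U e)
  /-- all the weights and all the edge uniforms are jointly independent -/
  hindep : iIndepFun (Sum.elim W U) μ
  /-- each weight is Pareto(θ=1, β) distributed: `P[W_x ≤ w] = 1 - w^{-β}` for `w ≥ 1`,
  and `0` otherwise; in particular `P[W_x > w] = w^{-β}` for `w ≥ 1`. -/
  hPareto : ∀ x w, μ {ω | W x ω ≤ w} =
      if 1 ≤ w then ENNReal.ofReal (1 - w ^ (-β)) else 0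
  /-- each edge variable is uniformly distributed on `[0,1]` -/
  hUnif : ∀ e, ∀ u ∈ Set.Icc (0 : ℝ) 1, μ {ω | U e ω ≤ u} = ENNReal.ofReal u

attribute [instance] Model.mΩ

variable {d : ℕ} {β : ℝ}

/-- The edge `(x,y)` is occupied in configuration `ω`, at parameters `(lam, α)`. -/
def occ (M : Model d β) (lam α : ℝ) (x y : V d) (ω : M.Ω) : Prop :=
  x ≠ y ∧ M.U s(x, y) ω ≤ 1 - Real.exp (-(lam * M.W x ω * M.W y ω) / edist x y ^ α)

/-- `x ↔ y` : the vertices `x` and `y` are joined by a finite path of occupied edges. -/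
def connected (M : Model d β) (lam α : ℝ) (ω : M.Ω) (x y : V d) : Prop :=
  Relation.ReflTransGen (fun a b => occ M lam α a b ω) x y

/-- The cluster `C(x)` of the vertex `x`. -/
def cluster (M : Model d β) (lam α : ℝ) (ω : M.Ω) (x : V d) : Set (V d) :=
  {y | connected M lam α ω x y}

/-- The percolation probability `θ(lam, α) = P[|C(0)| = ∞]`. -/
noncomputable def theta (M : Model d β) (lam α : ℝ) : ℝ :=
  (M.μ {ω | (cluster M lam α ω 0).Infinite}).toReal

/-- The critical value `λ_c(α) = inf {lam > 0 : θ(lam,α) > 0}`. -/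
noncomputable def lambdac (M : Model d β) (α : ℝ) : ℝ :=
  sInf {lam : ℝ | 0 < lam ∧ 0 < theta M lam α}


open scoped ENNReal Classical

namespace Peierls

open scoped Classical

abbrev Cell : Type := ℤ × ℤ
abbrev EC : Type := Cell × Bool

def ep1 (e : EC) : Cell := e.1
def ep2 (e : EC) : Cell := if e.2 then (e.1.1, e.1.2 + 1) else (e.1.1 + 1, e.1.2)

/-- the (at most two) faces on which an edge lies -/
def onFace (e : EC) (f : Cell) : Prop :=
  (e.2 = false ∧ f.1 = e.1.1 ∧ (f.2 = e.1.2 ∨ f.2 = e.1.2 - 1)) ∨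
  (e.2 = true ∧ f.2 = e.1.2 ∧ (f.1 = e.1.1 ∨ f.1 = e.1.1 - 1))

def adj (e e' : EC) : Prop := ∃ f, onFace e f ∧ onFace e' f

lemma onFace_iff (e : EC) (f : Cell) :
    onFace e f ↔ (e = ((f.1, f.2), false) ∨ e = ((f.1, f.2 + 1), false) ∨
      e = ((f.1, f.2), true) ∨ e = ((f.1 + 1, f.2), true)) := by
  obtain ⟨⟨a, b⟩, t⟩ := e
  cases t <;> simp [onFace, Prod.ext_iff] <;> constructor <;> intro h <;> omega

lemma onFace_fst {e : EC} {f : Cell} (h : onFace e f) :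
    e.1.1 = f.1 ∨ e.1.1 = f.1 + 1 := by
  rcases h with ⟨-, h1, -⟩ | ⟨-, -, h1⟩ <;> omega

lemma adj_fst {e e' : EC} (h : adj e e') : e.1.1 ≤ e'.1.1 + 1 ∧ e'.1.1 ≤ e.1.1 + 1 := by
  obtain ⟨f, h1, h2⟩ := h
  rcases onFace_fst h1 with h1' | h1' <;> rcases onFace_fst h2 with h2' | h2' <;> omega

/-- number of edges of `G` on the face `f` -/
noncomputable def faceDeg (G : Finset EC) (f : Cell) : ℕ :=
  (G.filter (fun e => onFace e f)).card

/-- number of horizontal edges of `G` in row `y` at position `≥ x` -/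
noncomputable def parRow (G : Finset EC) (x y : ℤ) : ℕ :=
  (G.filter (fun e => e.2 = false ∧ e.1.2 = y ∧ x ≤ e.1.1)).card

lemma filter_faces_eq (a b x y B : ℤ) (t : Bool) (s : Finset Cell)
    (h : ∀ u v : ℤ, ((x ≤ u ∧ u ≤ B) ∧ v = y) ∧ onFace ((a,b),t) (u,v) ↔ (u,v) ∈ s) :
    ((Finset.Icc x B ×ˢ ({y} : Finset ℤ)).filter (fun f => onFace ((a,b),t) f)) = s := by
  ext ⟨u, v⟩
  rw [Finset.mem_filter, Finset.mem_product, Finset.mem_Icc, Finset.mem_singleton]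
  exact h u v

lemma count_faces (e : EC) (x y B : ℤ) (he : e.1.1 ≤ B) :
    ((Finset.Icc x B ×ˢ ({y} : Finset ℤ)).filter (fun f => onFace e f)).card
      = ((if e.2 = false ∧ e.1.2 = y ∧ x ≤ e.1.1 then 1 else 0)
      + (if e.2 = false ∧ e.1.2 = y + 1 ∧ x ≤ e.1.1 then 1 else 0))
      + ((if e.2 = true ∧ e.1.2 = y ∧ x + 1 ≤ e.1.1 then 2 else 0)
      + (if e = ((x, y), true) then 1 else 0)) := by
  obtain ⟨⟨a, b⟩, t⟩ := e
  simp only at he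
  have hne : ((a,b),t) = (((x, y) : Cell), true) ↔ (a = x ∧ b = y ∧ t = true) := by
    simp [Prod.ext_iff]; tauto
  cases t
  · -- horizontal
    simp only [Bool.false_eq_true, false_and, if_false, true_and, and_false, if_neg (by simp [Prod.ext_iff] : ¬ (((a,b),false) = (((x, y) : Cell), true)))]
    by_cases hxa : x ≤ a
    · by_cases hb1 : b = y
      · subst hb1
        rw [filter_faces_eq a b x b B false {(a, b)} (by intro u v; simp only [onFace, Finset.mem_singleton, Prod.ext_iff]; simp; omega)]
        simp [hxa]
      · by_cases hb2 : b = y + 1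
        · subst hb2
          rw [filter_faces_eq a (y+1) x y B false {(a, y)} (by intro u v; simp only [onFace, Finset.mem_singleton, Prod.ext_iff]; simp; omega)]
          simp [hxa, hb1]
        · rw [filter_faces_eq a b x y B false ∅ (by intro u v; simp only [onFace, Finset.mem_singleton, Prod.ext_iff]; simp; omega)]
          simp [hb1, hb2]
    · rw [filter_faces_eq a b x y B false ∅ (by intro u v; simp only [onFace, Finset.mem_singleton, Prod.ext_iff]; simp; omega)]
      simp [hxa]
  · -- vertical
    simp only [Bool.true_eq_false, false_and, if_false, true_and, hne]
    by_cases hb1 : b = y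
    · subst hb1
      by_cases h1 : x + 1 ≤ a
      · rw [filter_faces_eq a b x b B true {(a, b), (a-1, b)} (by intro u v; simp only [onFace, Finset.mem_insert, Finset.mem_singleton, Prod.ext_iff]; simp; omega)]
        rw [Finset.card_insert_of_notMem (by simp [Prod.ext_iff]; omega)]
        simp [h1]
        omega
      · by_cases h2 : a = x
        · subst h2
          rw [filter_faces_eq a b a b B true {(a, b)} (by intro u v; simp only [onFace, Finset.mem_singleton, Prod.ext_iff]; simp; omega)]
          simp [h1]
        · rw [filter_faces_eq a b x b B true ∅ (by intro u v; simp only [onFace, Finset.mem_singleton, Prod.ext_iff]; simp; omega)]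
          simp [h1, h2]
    · rw [filter_faces_eq a b x y B true ∅ (by intro u v; simp only [onFace, Finset.mem_singleton, Prod.ext_iff]; simp; omega)]
      simp [hb1]

lemma halfrow (G : Finset EC) (B : ℤ) (hB : ∀ e ∈ G, e.1.1 ≤ B)
    (heven : ∀ f, Even (faceDeg G f)) (x y : ℤ) :
    (parRow G x y + parRow G x (y + 1) + (if ((x, y), true) ∈ G then 1 else 0)) % 2 = 0 := by
  classical
  set F : Finset Cell := Finset.Icc x B ×ˢ ({y} : Finset ℤ) with hF
  have key : ∑ f ∈ F, faceDeg G f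
      = ∑ e ∈ G, (F.filter (fun f => onFace e f)).card := by
    unfold faceDeg
    rw [Finset.sum_congr rfl (fun f _ => Finset.card_filter _ _)]
    rw [Finset.sum_congr rfl (fun e _ => Finset.card_filter _ _)]
    exact Finset.sum_comm
  have hev : Even (∑ f ∈ F, faceDeg G f) :=
    Finset.sum_induction _ Even (fun a b => Even.add) Even.zero (fun f _ => heven f)
  rw [key] at hev
  rw [Finset.sum_congr rfl (fun e he => count_faces e x y B (hB e he))] at hev
  rw [Finset.sum_add_distrib, Finset.sum_add_distrib, Finset.sum_add_distrib] at hev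
  have e1 : ∑ e ∈ G, (if e.2 = false ∧ e.1.2 = y ∧ x ≤ e.1.1 then 1 else 0) = parRow G x y :=
    (Finset.card_filter _ _).symm
  have e2 : ∑ e ∈ G, (if e.2 = false ∧ e.1.2 = y + 1 ∧ x ≤ e.1.1 then 1 else 0)
      = parRow G x (y + 1) := (Finset.card_filter _ _).symm
  have e3 : Even (∑ e ∈ G, (if e.2 = true ∧ e.1.2 = y ∧ x + 1 ≤ e.1.1 then 2 else 0)) :=
    Finset.sum_induction _ Even (fun a b => Even.add) Even.zero
      (fun e _ => by split <;> simp)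
  have e4 : ∑ e ∈ G, (if e = ((x, y), true) then 1 else 0)
      = (if ((x, y), true) ∈ G then 1 else 0) := Finset.sum_ite_eq' G _ (fun _ => 1)
  rw [e1, e2, e4] at hev
  rw [Nat.even_iff] at hev e3
  omega

lemma parRow_succ (G : Finset EC) (x y : ℤ) :
    parRow G x y = (if ((x, y), false) ∈ G then 1 else 0) + parRow G (x + 1) y := by
  classical
  unfold parRow
  rw [Finset.card_filter, Finset.card_filter]
  rw [← Finset.sum_ite_eq' G (((x, y), false) : EC) (fun _ => 1)]
  rw [← Finset.sum_add_distrib]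
  refine Finset.sum_congr rfl (fun e _ => ?_)
  obtain ⟨⟨a, b⟩, t⟩ := e
  cases t
  · by_cases h1 : b = y <;> by_cases h2 : x ≤ a <;> by_cases h3 : a = x <;> by_cases h4 : x + 1 ≤ a <;>
      simp [h1, h2, h3, h4, Prod.ext_iff] <;> omega
  · simp [Prod.ext_iff]

/-! ### the boundary edge set of a finite set of cells -/

section Blocking

variable (χ : Cell → Prop)

def isBd (e : EC) : Prop := Xor' (χ (ep1 e)) (χ (ep2 e))

variable (S : Finset Cell)

noncomputable def cand : Finset EC :=
  S.biUnion (fun z => {(z, false), (z, true), ((z.1 - 1, z.2), false), ((z.1, z.2 - 1), true)})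

noncomputable def Gbd : Finset EC := (cand S).filter (fun e => isBd χ e)

lemma mem_Gbd (hS : ∀ z, χ z → z ∈ S) {e : EC} : e ∈ Gbd χ S ↔ isBd χ e := by
  constructor
  · intro h; exact (Finset.mem_filter.mp h).2
  · intro h
    refine Finset.mem_filter.mpr ⟨?_, h⟩
    rw [cand, Finset.mem_biUnion]
    rcases h with ⟨h1, -⟩ | ⟨h1, -⟩
    · exact ⟨e.1, hS _ h1, by cases ht : e.2 <;> simp [ht, Prod.ext_iff] <;> simp [ep1] at h1 ⊢ <;> tauto⟩
    · refine ⟨ep2 e, hS _ h1, ?_⟩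
      cases ht : e.2 <;> simp [ep2, ht, Prod.ext_iff] <;> tauto

lemma faceDeg_eq (G : Finset EC) (f : Cell) :
    faceDeg G f = ((if ((f.1, f.2), false) ∈ G then 1 else 0)
      + (if ((f.1, f.2 + 1), false) ∈ G then 1 else 0))
      + ((if ((f.1, f.2), true) ∈ G then 1 else 0)
      + (if ((f.1 + 1, f.2), true) ∈ G then 1 else 0)) := by
  classical
  unfold faceDeg
  rw [Finset.card_filter]
  rw [← Finset.sum_ite_eq' G (((f.1, f.2), false) : EC) (fun _ => 1)]
  rw [← Finset.sum_ite_eq' G (((f.1, f.2 + 1), false) : EC) (fun _ => 1)]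
  rw [← Finset.sum_ite_eq' G (((f.1, f.2), true) : EC) (fun _ => 1)]
  rw [← Finset.sum_ite_eq' G (((f.1 + 1, f.2), true) : EC) (fun _ => 1)]
  rw [← Finset.sum_add_distrib, ← Finset.sum_add_distrib, ← Finset.sum_add_distrib]
  refine Finset.sum_congr rfl (fun e _ => ?_)
  obtain ⟨⟨a, b⟩, t⟩ := e
  rw [onFace_iff]
  cases t <;> by_cases h1 : a = f.1 <;> by_cases h2 : b = f.2 <;> by_cases h3 : b = f.2 + 1 <;>
      by_cases h4 : a = f.1 + 1 <;> simp [h1, h2, h3, h4, Prod.ext_iff] <;> omega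

lemma Gbd_face_even (hS : ∀ z, χ z → z ∈ S) (f : Cell) : Even (faceDeg (Gbd χ S) f) := by
  classical
  rw [faceDeg_eq]
  simp only [mem_Gbd χ S hS]
  have h1 : isBd χ ((((f.1, f.2) : Cell), false)) ↔ Xor' (χ (f.1, f.2)) (χ (f.1 + 1, f.2)) := by
    simp [isBd, ep1, ep2]
  have h2 : isBd χ ((((f.1, f.2 + 1) : Cell), false)) ↔
      Xor' (χ (f.1, f.2 + 1)) (χ (f.1 + 1, f.2 + 1)) := by simp [isBd, ep1, ep2]
  have h3 : isBd χ ((((f.1, f.2) : Cell), true)) ↔ Xor' (χ (f.1, f.2)) (χ (f.1, f.2 + 1)) := by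
    simp [isBd, ep1, ep2]
  have h4 : isBd χ ((((f.1 + 1, f.2) : Cell), true)) ↔
      Xor' (χ (f.1 + 1, f.2)) (χ (f.1 + 1, f.2 + 1)) := by simp [isBd, ep1, ep2]
  rw [h1, h2, h3, h4]
  by_cases hA : χ (f.1, f.2) <;> by_cases hB : χ (f.1 + 1, f.2) <;>
    by_cases hC : χ (f.1, f.2 + 1) <;> by_cases hD : χ (f.1 + 1, f.2 + 1) <;>
    simp [Xor', hA, hB, hC, hD] <;> decide

end Blocking

/-! ### connected component of an edge set -/

def stepR (G : Finset EC) (e e' : EC) : Prop := e ∈ G ∧ e' ∈ G ∧ adj e e'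

noncomputable def comp (G : Finset EC) (e0 : EC) : Finset EC :=
  G.filter (fun e => Relation.ReflTransGen (stepR G) e0 e)

lemma comp_subset (G : Finset EC) (e0 : EC) : comp G e0 ⊆ G := Finset.filter_subset _ _

lemma mem_comp_self {G : Finset EC} {e0 : EC} (h : e0 ∈ G) : e0 ∈ comp G e0 :=
  Finset.mem_filter.mpr ⟨h, Relation.ReflTransGen.refl⟩

lemma comp_sat {G : Finset EC} {e0 e e' : EC} {f : Cell} (he : e ∈ comp G e0)
    (he' : e' ∈ G) (h1 : onFace e f) (h2 : onFace e' f) : e' ∈ comp G e0 := by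
  obtain ⟨heG, hre⟩ := Finset.mem_filter.mp he
  exact Finset.mem_filter.mpr ⟨he', hre.tail ⟨heG, he', f, h1, h2⟩⟩

lemma comp_face_even {G : Finset EC} {e0 : EC} (heven : ∀ f, Even (faceDeg G f)) (f : Cell) :
    Even (faceDeg (comp G e0) f) := by
  classical
  by_cases hne : ((comp G e0).filter (fun e => onFace e f)).Nonempty
  · have : (comp G e0).filter (fun e => onFace e f) = G.filter (fun e => onFace e f) := by
      obtain ⟨e, he⟩ := hne
      obtain ⟨hec, hef⟩ := Finset.mem_filter.mp he
      ext e'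
      simp only [Finset.mem_filter]
      constructor
      · intro ⟨h1, h2⟩; exact ⟨comp_subset G e0 h1, h2⟩
      · intro ⟨h1, h2⟩; exact ⟨comp_sat hec h1 hef h2, h2⟩
    unfold faceDeg
    rw [this]
    exact heven f
  · unfold faceDeg
    rw [Finset.not_nonempty_iff_eq_empty.mp hne]
    simp

/-! ### chains -/

lemma chain_mem_G {G : Finset EC} : ∀ (t : List EC) (e : EC),
    List.Chain (stepR G) e t → ∀ x ∈ t, x ∈ G := by
  intro t
  induction t with
  | nil => intro e _ x hx; simp at hx
  | cons b u ih =>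
    intro e hch x hx
    rw [List.Chain, List.chain_cons] at hch
    rcases List.mem_cons.mp hx with rfl | hx'
    · exact hch.1.2.1
    · exact ih b hch.2 x hx'

lemma chain_nodup {α : Type*} (r : α → α → Prop) : ∀ (t : List α) (e : α),
    List.Chain r e t → ∃ t', List.Chain r e t' ∧ (e :: t').Nodup ∧
      (e :: t').getLast? = (e :: t).getLast? ∧ ∀ x ∈ t', x ∈ t := by
  suffices H : ∀ (n : ℕ) (t : List α) (e : α), t.length ≤ n → List.Chain r e t →
      ∃ t', List.Chain r e t' ∧ (e :: t').Nodup ∧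
        (e :: t').getLast? = (e :: t).getLast? ∧ ∀ x ∈ t', x ∈ t by
    intro t e h; exact H t.length t e le_rfl h
  intro n
  induction n with
  | zero =>
    intro t e hlen h
    rw [Nat.le_zero, List.length_eq_zero_iff] at hlen
    subst hlen
    exact ⟨[], h, by simp, rfl, by simp⟩
  | succ n ih =>
  intro t e hlen h
  by_cases he : e ∈ t
  · obtain ⟨s, u, rfl⟩ := List.append_of_mem he
    rw [List.Chain, List.isChain_cons_split] at h
    obtain ⟨-, h2⟩ := h
    obtain ⟨t', ht1, ht2, ht3, ht4⟩ := ih u e (by simp at hlen; omega) h2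
    refine ⟨t', ht1, ht2, ?_, fun x hx => by simp [ht4 x hx]⟩
    rw [ht3]
    have : e :: (s ++ e :: u) = (e :: s) ++ e :: u := by simp
    rw [this, List.getLast?_append_cons]
  · cases t with
    | nil => exact ⟨[], h, by simp, rfl, by simp⟩
    | cons b u =>
      rw [List.Chain, List.chain_cons] at h
      obtain ⟨t', ht1, ht2, ht3, ht4⟩ := ih u b (by simp at hlen; omega) h.2
      refine ⟨b :: t', List.chain_cons.mpr ⟨h.1, ht1⟩, ?_, ?_, ?_⟩
      · refine List.nodup_cons.mpr ⟨?_, ht2⟩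
        intro hx
        rcases List.mem_cons.mp hx with rfl | h'
        · exact he List.mem_cons_self
        · exact he (List.mem_cons.mpr (Or.inr (ht4 _ h')))
      · rw [List.getLast?_cons_cons, List.getLast?_cons_cons, ht3]
      · intro x hx
        rcases List.mem_cons.mp hx with rfl | h'
        · exact List.mem_cons_self
        · exact List.mem_cons.mpr (Or.inr (ht4 _ h'))

lemma chain_span : ∀ (t : List EC) (e : EC), List.Chain adj e t →
    e.1.1 ≤ (t.getLastD e).1.1 + t.length := by
  intro t
  induction t with
  | nil => intro e _; simp
  | cons b u ih =>
    intro e hch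
    rw [List.Chain, List.chain_cons] at hch
    have h1 := (adj_fst hch.1).1
    have h2 := ih b hch.2
    rw [List.getLastD_cons]
    simp only [List.length_cons]
    push_cast
    omega

/-! ### the main blocking-chain theorem -/

theorem exists_blocking_chain (χ : Cell → Prop) (hfin : {z : Cell | χ z}.Finite) (h0 : χ (0, 0))
    (hconn : ∀ z, χ z → Relation.ReflTransGen
      (fun a b => (|a.1 - b.1| + |a.2 - b.2| = 1) ∧ χ a ∧ χ b) ((0 : ℤ), (0 : ℤ)) z) :
    ∃ (K : ℤ) (t : List EC), 0 ≤ K ∧ List.Chain adj ((K, 0), false) t ∧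
      (((K, 0), false) :: t).Nodup ∧ (∀ e ∈ (((K, 0), false) :: t), isBd χ e) ∧
      K + 2 ≤ (((((K, 0), false) : EC) :: t).length : ℤ) := by
  classical
  set S : Finset Cell := hfin.toFinset with hSdef
  have hS : ∀ z, χ z → z ∈ S := fun z hz => hfin.mem_toFinset.mpr hz
  set Γ : Finset EC := Gbd χ S with hΓdef
  have hmemΓ : ∀ {e : EC}, e ∈ Γ ↔ isBd χ e := fun {e} => mem_Gbd χ S hS
  -- the maximal row-0 coordinate of χ
  set R : Finset ℤ := (S.filter (fun z => χ z ∧ z.2 = 0)).image Prod.fst with hRdef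
  have hRmem : ∀ m : ℤ, χ (m, 0) → m ∈ R := by
    intro m hm
    rw [hRdef, Finset.mem_image]
    exact ⟨(m, 0), Finset.mem_filter.mpr ⟨hS _ hm, hm, rfl⟩, rfl⟩
  have hRne : R.Nonempty := ⟨0, hRmem 0 h0⟩
  set K : ℤ := R.max' hRne with hKdef
  have hK0 : 0 ≤ K := Finset.le_max' R 0 (hRmem 0 h0)
  have hKmem : χ (K, 0) := by
    have h : K ∈ R := R.max'_mem hRne
    obtain ⟨z, hz, hz1⟩ := Finset.mem_image.mp h
    obtain ⟨-, hχ, hz2⟩ := Finset.mem_filter.mp hz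
    have hzeq : z = (K, 0) := Prod.ext_iff.mpr ⟨hz1, hz2⟩
    rwa [hzeq] at hχ
  have hKmax : ∀ m : ℤ, χ (m, 0) → m ≤ K := fun m hm => Finset.le_max' R m (hRmem m hm)
  set e0 : EC := ((K, 0), false) with he0def
  have hep1e0 : ep1 e0 = (K, 0) := rfl
  have hep2e0 : ep2 e0 = (K + 1, 0) := rfl
  have he0Γ : e0 ∈ Γ := by
    rw [hmemΓ]
    refine Or.inl ⟨hKmem, fun hc => ?_⟩
    have := hKmax (K + 1) (by rwa [hep2e0] at hc)
    omega
  set G : Finset EC := comp Γ e0 with hGdef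
  have hGsub : G ⊆ Γ := comp_subset _ _
  have hGeven : ∀ f, Even (faceDeg G f) := comp_face_even (Gbd_face_even χ S hS)
  -- coordinate bounds for G
  set Bn : ℕ := Γ.sup (fun e => e.1.1.natAbs ⊔ e.1.2.natAbs) with hBdef
  have hBabs : ∀ e ∈ G, e.1.1.natAbs ≤ Bn ∧ e.1.2.natAbs ≤ Bn := by
    intro e he
    have h := Finset.le_sup (f := fun e : EC => e.1.1.natAbs ⊔ e.1.2.natAbs) (hGsub he)
    rw [← hBdef] at h
    exact ⟨le_trans (le_max_left _ _) h, le_trans (le_max_right _ _) h⟩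
  have hBup : ∀ e ∈ G, e.1.1 ≤ (Bn : ℤ) := by
    intro e he
    have := (hBabs e he).1
    omega
  have hBlow : ∀ e ∈ G, -(Bn : ℤ) ≤ e.1.1 := by
    intro e he
    have := (hBabs e he).1
    omega
  have hBrow : ∀ e ∈ G, e.1.2 ≤ (Bn : ℤ) := by
    intro e he
    have := (hBabs e he).2
    omega
  -- interior edges are not in G
  have hnotmem : ∀ (e : EC), χ (ep1 e) → χ (ep2 e) → e ∉ G := by
    intro e h1 h2 hmem
    rcases hmemΓ.mp (hGsub hmem) with ⟨-, hb⟩ | ⟨-, hb⟩ <;> exact hb ‹_›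
  -- parity computations
  have hpar1 : parRow G (K + 1) 0 = 0 := by
    rw [parRow, Finset.card_eq_zero, Finset.filter_eq_empty_iff]
    rintro e he ⟨ht, hy, hx⟩
    obtain ⟨⟨a, b⟩, t⟩ := e
    simp only at ht hy hx
    subst ht hy
    rcases hmemΓ.mp (hGsub he) with ⟨h1, -⟩ | ⟨h1, -⟩
    · have := hKmax a (by exact h1)
      omega
    · have := hKmax (a + 1) (by simpa [ep2] using h1)
      omega
  have hpare0 : e0 ∈ G := mem_comp_self he0Γ
  have hparK : parRow G K 0 % 2 = 1 := by
    rw [parRow_succ, hpar1, if_pos hpare0]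
  -- parity transport along nearest-neighbour paths inside χ
  have htrans : ∀ z : Cell, Relation.ReflTransGen
      (fun a b => (|a.1 - b.1| + |a.2 - b.2| = 1) ∧ χ a ∧ χ b) ((0 : ℤ), (0 : ℤ)) z →
      parRow G 0 0 % 2 = parRow G z.1 z.2 % 2 := by
    intro z hz
    induction hz with
    | refl => rfl
    | @tail b c hab hbc ih =>
      obtain ⟨b1, b2⟩ := b
      obtain ⟨c1, c2⟩ := c
      obtain ⟨habs, hχb, hχc⟩ := hbc
      replace habs : |b1 - c1| + |b2 - c2| = 1 := habs
      replace ih : parRow G 0 0 % 2 = parRow G b1 b2 % 2 := ih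
      show parRow G 0 0 % 2 = parRow G c1 c2 % 2
      have hcase : (c1 = b1 + 1 ∧ c2 = b2) ∨ (b1 = c1 + 1 ∧ c2 = b2) ∨
          (c2 = b2 + 1 ∧ c1 = b1) ∨ (b2 = c2 + 1 ∧ c1 = b1) := by
        rcases abs_cases (b1 - c1) with ⟨ha1, ha2⟩ | ⟨ha1, ha2⟩ <;>
          rcases abs_cases (b2 - c2) with ⟨hc1', hc2'⟩ | ⟨hc1', hc2'⟩ <;>
          rw [ha1, hc1'] at habs <;> omega
      rcases hcase with ⟨h1, h2⟩ | ⟨h1, h2⟩ | ⟨h1, h2⟩ | ⟨h1, h2⟩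
      · have hnm : (((b1, b2), false) : EC) ∉ G :=
          hnotmem _ hχb (show χ (ep2 ((b1, b2), false)) from by
            show χ (b1 + 1, b2); rw [h1, h2] at hχc; exact hχc)
        have hstep := parRow_succ G b1 b2
        rw [if_neg hnm] at hstep
        rw [ih, h1, h2]
        omega
      · have hnm : (((c1, c2), false) : EC) ∉ G :=
          hnotmem _ hχc (show χ (ep2 ((c1, c2), false)) from by
            show χ (c1 + 1, c2); rw [← h1, h2]; exact hχb)
        have hstep := parRow_succ G c1 c2
        rw [if_neg hnm] at hstep
        rw [h1, ← h2] at ih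
        rw [ih]
        omega
      · have hnm : (((b1, b2), true) : EC) ∉ G :=
          hnotmem _ hχb (show χ (ep2 ((b1, b2), true)) from by
            show χ (b1, b2 + 1); rw [h1, h2] at hχc; exact hχc)
        have hh := halfrow G (Bn : ℤ) hBup hGeven b1 b2
        rw [if_neg hnm] at hh
        rw [ih, h1, h2]
        omega
      · have hnm : (((c1, c2), true) : EC) ∉ G :=
          hnotmem _ hχc (show χ (ep2 ((c1, c2), true)) from by
            show χ (c1, c2 + 1); rw [← h1, h2]; exact hχb)
        have hh := halfrow G (Bn : ℤ) hBup hGeven c1 c2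
        rw [if_neg hnm] at hh
        rw [← h2, h1] at ih
        rw [ih]
        omega
  have hpar0 : parRow G 0 0 % 2 = 1 := by
    have h := htrans (K, 0) (hconn _ hKmem)
    simpa [hparK] using h
  -- the ladder : the total number of horizontal row-0 edges of G is even
  have hroweven : ∀ y : ℤ,
      (parRow G (-(Bn : ℤ) - 1) y + parRow G (-(Bn : ℤ) - 1) (y + 1)) % 2 = 0 := by
    intro y
    have h := halfrow G (Bn : ℤ) hBup hGeven (-(Bn : ℤ) - 1) y
    have hni : (((-(Bn : ℤ) - 1, y), true) : EC) ∉ G := by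
      intro hc
      have h2 : -(Bn : ℤ) ≤ -(Bn : ℤ) - 1 := hBlow _ hc
      omega
    rw [if_neg hni] at h
    omega
  have hladder : ∀ n : ℕ,
      parRow G (-(Bn : ℤ) - 1) 0 % 2 = parRow G (-(Bn : ℤ) - 1) (n : ℤ) % 2 := by
    intro n
    induction n with
    | zero => rfl
    | succ m ih =>
      have h := hroweven (m : ℤ)
      push_cast
      omega
  have htop : parRow G (-(Bn : ℤ) - 1) ((Bn : ℤ) + 1) = 0 := by
    rw [parRow, Finset.card_eq_zero, Finset.filter_eq_empty_iff]
    rintro e he ⟨-, hy, -⟩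
    have := hBrow e he
    omega
  have hN0 : parRow G (-(Bn : ℤ) - 1) 0 % 2 = 0 := by
    have h := hladder (Bn + 1)
    push_cast at h
    rw [htop] at h
    omega
  -- split the row into negative and non-negative parts
  have hsplit : parRow G (-(Bn : ℤ) - 1) 0 =
      (G.filter (fun e => e.2 = false ∧ e.1.2 = 0 ∧ e.1.1 ≤ -1)).card + parRow G 0 0 := by
    rw [parRow, parRow, Finset.card_filter, Finset.card_filter, Finset.card_filter,
      ← Finset.sum_add_distrib]
    refine Finset.sum_congr rfl (fun e he => ?_)
    have hb := hBlow e he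
    by_cases h1 : e.2 = false <;> by_cases h2 : e.1.2 = 0 <;> by_cases h3 : e.1.1 ≤ -1 <;>
      by_cases h4 : (0 : ℤ) ≤ e.1.1 <;> by_cases h5 : -(Bn : ℤ) - 1 ≤ e.1.1 <;>
      simp [h1, h2, h3, h4, h5] <;> omega
  have hfar : ∃ e', e' ∈ G ∧ e'.2 = false ∧ e'.1.2 = 0 ∧ e'.1.1 ≤ -1 := by
    have hpos : 0 < (G.filter (fun e => e.2 = false ∧ e.1.2 = 0 ∧ e.1.1 ≤ -1)).card := by
      omega
    obtain ⟨e', he'⟩ := Finset.card_pos.mp hpos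
    obtain ⟨hG', hcond⟩ := Finset.mem_filter.mp he'
    exact ⟨e', hG', hcond.1, hcond.2.1, hcond.2.2⟩
  obtain ⟨e', he'G, he'h, he'row, he'neg⟩ := hfar
  -- extract a chain from e0 to e'
  have hreach : Relation.ReflTransGen (stepR Γ) e0 e' := (Finset.mem_filter.mp he'G).2
  obtain ⟨t0, hchain0, hlast0⟩ := List.exists_isChain_cons_of_relationReflTransGen hreach
  obtain ⟨t, ht1, ht2, ht3, ht4⟩ := chain_nodup (stepR Γ) t0 e0 hchain0
  have hlast? : (e0 :: t).getLast? = some e' := by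
    rw [ht3]
    rw [List.getLast?_eq_getLast (by simp)]
    rw [hlast0]
  have hchadj : List.Chain adj e0 t := List.IsChain.imp (fun ⦃a b⦄ hab => hab.2.2) ht1
  have hmemt : ∀ x ∈ t, x ∈ Γ := fun x hx => chain_mem_G t0 e0 hchain0 x (ht4 x hx)
  refine ⟨K, t, hK0, hchadj, ht2, ?_, ?_⟩
  · intro e he
    rcases List.mem_cons.mp he with rfl | he'
    · exact hmemΓ.mp he0Γ
    · exact hmemΓ.mp (hmemt _ he')
  · -- the span bound
    have hspan := chain_span t e0 hchadj
    have hlastD : t.getLastD e0 = e' := by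
      have h := List.getLast?_cons (l := t) (a := e0)
      rw [hlast?] at h
      rw [List.getLastD_eq_getLast?]
      exact (Option.some_inj.mp h).symm
    rw [hlastD] at hspan
    simp only [List.length_cons]
    have : e0.1.1 = K := rfl
    push_cast
    omega

/-! ### encoding chains by step sequences -/

def nbr (e : EC) (i : Fin 8) : EC :=
  if e.2 then
    match i with
    | 0 => ((e.1.1, e.1.2), false)
    | 1 => ((e.1.1, e.1.2 + 1), false)
    | 2 => ((e.1.1, e.1.2), true)
    | 3 => ((e.1.1 + 1, e.1.2), true)
    | 4 => ((e.1.1 - 1, e.1.2), false)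
    | 5 => ((e.1.1 - 1, e.1.2 + 1), false)
    | 6 => ((e.1.1 - 1, e.1.2), true)
    | 7 => ((e.1.1, e.1.2), true)
  else
    match i with
    | 0 => ((e.1.1, e.1.2), false)
    | 1 => ((e.1.1, e.1.2 + 1), false)
    | 2 => ((e.1.1, e.1.2), true)
    | 3 => ((e.1.1 + 1, e.1.2), true)
    | 4 => ((e.1.1, e.1.2 - 1), false)
    | 5 => ((e.1.1, e.1.2), false)
    | 6 => ((e.1.1, e.1.2 - 1), true)
    | 7 => ((e.1.1 + 1, e.1.2 - 1), true)

lemma adj_nbr {e e' : EC} (h : adj e e') : ∃ i : Fin 8, nbr e i = e' := by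
  obtain ⟨⟨u, v⟩, h1, h2⟩ := h
  rw [onFace_iff] at h2
  obtain ⟨⟨a, b⟩, t⟩ := e
  replace h2 : e' = ((u, v), false) ∨ e' = ((u, v + 1), false) ∨
      e' = ((u, v), true) ∨ e' = ((u + 1, v), true) := h2
  replace h1 : (t = false ∧ u = a ∧ (v = b ∨ v = b - 1)) ∨
      (t = true ∧ v = b ∧ (u = a ∨ u = a - 1)) := h1
  cases t
  · rcases h1 with ⟨-, hu, hv | hv⟩ | ⟨hcontra, -, -⟩
    · subst hu; subst hv
      rcases h2 with rfl | rfl | rfl | rfl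
      exacts [⟨0, by simp [nbr]⟩, ⟨1, by simp [nbr]⟩, ⟨2, by simp [nbr]⟩, ⟨3, by simp [nbr]⟩]
    · subst hu; subst hv
      rcases h2 with rfl | rfl | rfl | rfl
      exacts [⟨4, by simp [nbr, Prod.ext_iff]⟩, ⟨5, by simp [nbr, Prod.ext_iff] <;> omega⟩,
        ⟨6, by simp [nbr, Prod.ext_iff]⟩, ⟨7, by simp [nbr, Prod.ext_iff]⟩]
    · exact absurd hcontra (by simp)
  · rcases h1 with ⟨hcontra, -, -⟩ | ⟨-, hv, hu | hu⟩
    · exact absurd hcontra (by simp)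
    · subst hu; subst hv
      rcases h2 with rfl | rfl | rfl | rfl
      exacts [⟨0, by simp [nbr]⟩, ⟨1, by simp [nbr]⟩, ⟨2, by simp [nbr]⟩, ⟨3, by simp [nbr]⟩]
    · subst hu; subst hv
      rcases h2 with rfl | rfl | rfl | rfl
      exacts [⟨4, by simp [nbr, Prod.ext_iff]⟩, ⟨5, by simp [nbr, Prod.ext_iff]⟩,
        ⟨6, by simp [nbr, Prod.ext_iff]⟩, ⟨7, by simp [nbr, Prod.ext_iff] <;> omega⟩]

def walkFrom (e : EC) : List (Fin 8) → List EC
  | [] => [e]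
  | i :: r => e :: walkFrom (nbr e i) r

lemma walkFrom_length (e : EC) (s : List (Fin 8)) : (walkFrom e s).length = s.length + 1 := by
  induction s generalizing e with
  | nil => rfl
  | cons i r ih => simp [walkFrom, ih]

lemma walkFrom_exists : ∀ (t : List EC) (e : EC), List.Chain adj e t →
    ∃ s : List (Fin 8), walkFrom e s = e :: t := by
  intro t
  induction t with
  | nil => exact fun e _ => ⟨[], rfl⟩
  | cons b u ih =>
    intro e h
    rw [List.Chain, List.chain_cons] at h
    obtain ⟨i, hi⟩ := adj_nbr h.1
    obtain ⟨s, hs⟩ := ih b h.2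
    refine ⟨i :: s, ?_⟩
    show e :: walkFrom (nbr e i) s = e :: b :: u
    rw [hi, hs]


end Peierls

/-! ### the probability layer -/

open Peierls

noncomputable def lam0 : ℝ := Real.log 10000

noncomputable def p0 : ℝ := 1 - 1 / 10000

lemma lam0_pos : 0 < lam0 := Real.log_pos (by norm_num)

lemma exp_neg_lam0 : Real.exp (-lam0) = 1 / 10000 := by
  rw [Real.exp_neg, lam0, Real.exp_log (by norm_num)]
  norm_num

/-- embedding of `ℤ²` into `ℤ^d` -/
def emb (d : ℕ) (z : Cell) : V d := fun i => if (i : ℕ) = 0 then z.1 else if (i : ℕ) = 1 then z.2 else 0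

lemma emb_injective {d : ℕ} (hd : 2 ≤ d) : Function.Injective (emb d) := by
  intro z w h
  have h0 : emb d z ⟨0, by omega⟩ = emb d w ⟨0, by omega⟩ := by rw [h]
  have h1 : emb d z ⟨1, by omega⟩ = emb d w ⟨1, by omega⟩ := by rw [h]
  simp [emb] at h0 h1
  exact Prod.ext_iff.mpr ⟨h0, h1⟩

lemma emb_zero {d : ℕ} : emb d ((0 : ℤ), (0 : ℤ)) = (fun _ => 0 : V d) := by
  funext i
  simp [emb]

lemma edist_emb {d : ℕ} (hd : 2 ≤ d) {z w : Cell} (h : |z.1 - w.1| + |z.2 - w.2| = 1) :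
    edist (emb d z) (emb d w) = 1 := by
  have hcase : (z.1 - w.1 = 1 ∧ z.2 = w.2) ∨ (z.1 - w.1 = -1 ∧ z.2 = w.2) ∨
      (z.2 - w.2 = 1 ∧ z.1 = w.1) ∨ (z.2 - w.2 = -1 ∧ z.1 = w.1) := by
    rcases abs_cases (z.1 - w.1) with ⟨ha1, ha2⟩ | ⟨ha1, ha2⟩ <;>
      rcases abs_cases (z.2 - w.2) with ⟨hc1, hc2⟩ | ⟨hc1, hc2⟩ <;>
      rw [ha1, hc1] at h <;> omega
  have i0 : Fin d := ⟨0, by omega⟩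
  have hsum : ∑ i, ((emb d z i : ℝ) - (emb d w i : ℝ)) ^ 2
      = ((z.1 : ℝ) - (w.1 : ℝ)) ^ 2 + ((z.2 : ℝ) - (w.2 : ℝ)) ^ 2 := by
    have hne : (⟨0, by omega⟩ : Fin d) ≠ (⟨1, by omega⟩ : Fin d) := by
      simp [Fin.ext_iff]
    rw [← Finset.sum_subset (Finset.subset_univ {(⟨0, by omega⟩ : Fin d), ⟨1, by omega⟩})]
    · rw [Finset.sum_pair hne]
      simp [emb]
    · intro i _ hi
      simp only [Finset.mem_insert, Finset.mem_singleton] at hi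
      push_neg at hi
      have h1 : (i : ℕ) ≠ 0 := fun hc => hi.1 (by simp [Fin.ext_iff, hc])
      have h2 : (i : ℕ) ≠ 1 := fun hc => hi.2 (by simp [Fin.ext_iff, hc])
      simp [emb, h1, h2]
  unfold edist
  rw [hsum]
  rcases hcase with ⟨h1, h2⟩ | ⟨h1, h2⟩ | ⟨h1, h2⟩ | ⟨h1, h2⟩ <;>
    rw [show ((z.1 : ℝ) - w.1) = ((z.1 - w.1 : ℤ) : ℝ) by push_cast; ring,
      show ((z.2 : ℝ) - w.2) = ((z.2 - w.2 : ℤ) : ℝ) by push_cast; ring, h1] <;>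
    simp [h2] <;> norm_num [Real.sqrt_one]

/-- the `Sym2` edge corresponding to an edge code -/
noncomputable def esym (d : ℕ) (e : EC) : Sym2 (V d) := s(emb d (ep1 e), emb d (ep2 e))

lemma ep_nn (e : EC) : |(ep1 e).1 - (ep2 e).1| + |(ep1 e).2 - (ep2 e).2| = 1 := by
  obtain ⟨⟨a, b⟩, t⟩ := e
  cases t <;> simp [ep1, ep2]

lemma ep_ne (e : EC) : ep1 e ≠ ep2 e := by
  obtain ⟨⟨a, b⟩, t⟩ := e
  cases t <;> simp [ep1, ep2, Prod.ext_iff] <;> omega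

lemma esym_injective {d : ℕ} (hd : 2 ≤ d) : Function.Injective (esym d) := by
  intro e e' h
  rw [esym, esym, Sym2.eq_iff] at h
  have hinj := emb_injective hd
  rcases h with ⟨h1, h2⟩ | ⟨h1, h2⟩
  · have h1' := hinj h1
    have h2' := hinj h2
    obtain ⟨⟨a, b⟩, t⟩ := e
    obtain ⟨⟨a', b'⟩, t'⟩ := e'
    cases t <;> cases t' <;> simp [ep1, ep2, Prod.ext_iff] at h1' h2' ⊢ <;> omega
  · have h1' := hinj h1
    have h2' := hinj h2
    obtain ⟨⟨a, b⟩, t⟩ := e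
    obtain ⟨⟨a', b'⟩, t'⟩ := e'
    cases t <;> cases t' <;> simp [ep1, ep2, Prod.ext_iff] at h1' h2' ⊢ <;> omega

/-- tail of a geometric series -/
lemma tsum_tail (r : ℝ≥0∞) (m : ℕ) :
    ∑' n : ℕ, (if m ≤ n then r ^ n else 0) = r ^ m * ∑' k : ℕ, r ^ k := by
  rw [← ENNReal.tsum_mul_left]
  apply tsum_eq_tsum_of_ne_zero_bij (i := fun k => m + (k : ℕ))
  · intro k k' hkk'
    exact Subtype.ext (by simpa using hkk')
  · intro n hn
    simp only [Function.mem_support, ne_eq, ite_eq_right_iff, not_forall] at hn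
    obtain ⟨hmn, hrn⟩ := hn
    refine ⟨⟨n - m, ?_⟩, by simp; omega⟩
    simp only [Function.mem_support, ne_eq]
    intro hc
    apply hrn
    rw [show n = m + (n - m) by omega, pow_add]
    exact hc
  · intro k
    simp only [if_pos (Nat.le_add_right m k), pow_add]





section ModelPart

variable {d : ℕ} {β : ℝ} (M : Model d β)

/-- the null set where some weight along the embedded lattice is `< 1` -/
def NW : Set M.Ω := ⋃ z : Cell, {ω | M.W (emb d z) ω < 1}

lemma NW_meas : MeasurableSet (NW M) :=
  MeasurableSet.iUnion fun z => (M.hW_meas (emb d z)) measurableSet_Iio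

lemma NW_null : M.μ (NW M) = 0 := by
  apply measure_iUnion_null
  intro z
  have hset : {ω | M.W (emb d z) ω < 1} = ⋃ n : ℕ, {ω | M.W (emb d z) ω ≤ 1 - 1 / (n + 1)} := by
    ext ω
    simp only [Set.mem_setOf_eq, Set.mem_iUnion]
    constructor
    · intro h
      obtain ⟨n, hn⟩ := exists_nat_one_div_lt (show (0 : ℝ) < 1 - M.W (emb d z) ω by linarith)
      exact ⟨n, by push_cast at hn ⊢; linarith⟩
    · intro ⟨n, hn⟩
      have hpos : (0 : ℝ) < 1 / ((n : ℝ) + 1) := by positivity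
      push_cast at hn
      linarith
  rw [hset]
  apply measure_iUnion_null
  intro n
  rw [M.hPareto, if_neg]
  intro hc
  have hpos : (0 : ℝ) < 1 / ((n : ℕ) + 1 : ℝ) := by positivity
  push_cast at hc
  linarith

lemma mu_single (s2 : Sym2 (V d)) :
    M.μ ((M.U s2) ⁻¹' (Set.Ioi p0)) = ENNReal.ofReal (1 / 10000) := by
  haveI := M.hprob
  have hle : M.μ {ω | M.U s2 ω ≤ p0} = ENNReal.ofReal p0 :=
    M.hUnif s2 p0 ⟨by norm_num [p0], by norm_num [p0]⟩
  have hset : (M.U s2) ⁻¹' (Set.Ioi p0) = {ω | M.U s2 ω ≤ p0}ᶜ := by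
    ext ω
    simp [not_le]
  have hmeas : MeasurableSet {ω | M.U s2 ω ≤ p0} := (M.hU_meas s2) measurableSet_Iic
  rw [hset, measure_compl hmeas (measure_ne_top _ _), hle, measure_univ]
  rw [show (1 : ℝ≥0∞) = ENNReal.ofReal 1 from ENNReal.ofReal_one.symm,
    ← ENNReal.ofReal_sub _ (by norm_num [p0])]
  norm_num [p0]

lemma mu_inter (hd : 2 ≤ d) (T : Finset EC) :
    M.μ (⋂ e ∈ T, (M.U (esym d e)) ⁻¹' (Set.Ioi p0))
      = ENNReal.ofReal (1 / 10000) ^ T.card := by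
  classical
  have key := M.hindep.meas_biInter
    (S := T.image (fun e => (Sum.inr (esym d e) : V d ⊕ Sym2 (V d))))
    (s := fun i => (Sum.elim M.W M.U i) ⁻¹' (Set.Ioi p0))
    (fun i _ => ⟨Set.Ioi p0, measurableSet_Ioi, rfl⟩)
  have h1 : ⋂ i ∈ T.image (fun e => (Sum.inr (esym d e) : V d ⊕ Sym2 (V d))),
      (Sum.elim M.W M.U i) ⁻¹' (Set.Ioi p0) = ⋂ e ∈ T, (M.U (esym d e)) ⁻¹' (Set.Ioi p0) := by
    ext ω
    simp only [Set.mem_iInter, Finset.mem_image, forall_exists_index, and_imp]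
    constructor
    · intro h e he
      exact h _ e he rfl
    · rintro h i e he rfl
      exact h e he
  rw [h1] at key
  rw [key, Finset.prod_image (fun e _ e' _ h => esym_injective hd (Sum.inr.inj h))]
  have h2 : ∀ e ∈ T, M.μ ((fun i => Sum.elim M.W M.U i ⁻¹' Set.Ioi p0)
      ((Sum.inr (esym d e) : V d ⊕ Sym2 (V d)))) = ENNReal.ofReal (1 / 10000) :=
    fun e _ => mu_single M (esym d e)
  rw [Finset.prod_congr rfl h2, Finset.prod_const]

lemma occ_of (hd : 2 ≤ d) (α : ℝ) {ω : M.Ω} (hω : ω ∉ NW M) {z z' : Cell}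
    (hnn : |z.1 - z'.1| + |z.2 - z'.2| = 1) (hU : M.U s(emb d z, emb d z') ω ≤ p0) :
    occ M lam0 α (emb d z) (emb d z') ω := by
  have hW : ∀ y : Cell, 1 ≤ M.W (emb d y) ω := by
    intro y
    by_contra hc
    exact hω (Set.mem_iUnion.mpr ⟨y, by simpa using lt_of_not_ge hc⟩)
  constructor
  · intro hc
    have hzz := emb_injective hd hc
    rw [hzz] at hnn
    simp at hnn
  · rw [edist_emb hd hnn, Real.one_rpow]
    refine le_trans hU ?_
    have h1 : Real.exp (-(lam0 * M.W (emb d z) ω * M.W (emb d z') ω) / 1) ≤ Real.exp (-lam0) := by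
      rw [div_one]
      apply Real.exp_le_exp.mpr
      have hq := hW z
      have hq' := hW z'
      have hl := lam0_pos
      have hz0 : 0 ≤ lam0 * M.W (emb d z) ω := mul_nonneg hl.le (le_trans zero_le_one hq)
      have hm1 : lam0 * 1 ≤ lam0 * M.W (emb d z) ω := mul_le_mul_of_nonneg_left hq hl.le
      have hm2 : lam0 * M.W (emb d z) ω * 1 ≤ lam0 * M.W (emb d z) ω * M.W (emb d z') ω :=
        mul_le_mul_of_nonneg_left hq' hz0
      linarith
    rw [exp_neg_lam0] at h1
    rw [p0]
    linarith

/-- membership of an embedded cell in the cluster of the origin, witnessed by a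
nearest-neighbour path -/
def chic (α : ℝ) (ω : M.Ω) (z : Cell) : Prop :=
  Relation.ReflTransGen (fun a b => (|a.1 - b.1| + |a.2 - b.2| = 1) ∧
    emb d a ∈ cluster M lam0 α ω 0 ∧ emb d b ∈ cluster M lam0 α ω 0) ((0 : ℤ), (0 : ℤ)) z

lemma chic_zero (α : ℝ) (ω : M.Ω) : chic M α ω ((0 : ℤ), (0 : ℤ)) := Relation.ReflTransGen.refl

lemma zero_mem_cluster (α : ℝ) (ω : M.Ω) : emb d ((0:ℤ), (0:ℤ)) ∈ cluster M lam0 α ω 0 := by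
  rw [emb_zero]
  exact Relation.ReflTransGen.refl

lemma chic_sub (α : ℝ) (ω : M.Ω) : ∀ z, chic M α ω z → emb d z ∈ cluster M lam0 α ω 0 := by
  intro z hz
  induction hz with
  | refl => exact zero_mem_cluster M α ω
  | tail hab hbc ih => exact hbc.2.2

lemma chic_conn (α : ℝ) (ω : M.Ω) : ∀ z, chic M α ω z → Relation.ReflTransGen
    (fun a b => (|a.1 - b.1| + |a.2 - b.2| = 1) ∧ chic M α ω a ∧ chic M α ω b)
    ((0 : ℤ), (0 : ℤ)) z := by
  intro z hz
  induction hz with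
  | refl => exact Relation.ReflTransGen.refl
  | @tail b c hab hbc ih => exact ih.tail ⟨hbc.1, hab, hab.tail hbc⟩

lemma bd_closed (hd : 2 ≤ d) (α : ℝ) {ω : M.Ω} (hω : ω ∉ NW M) {e : EC}
    (hbd : isBd (chic M α ω) e) : p0 < M.U (esym d e) ω := by
  by_contra hc
  push_neg at hc
  rcases hbd with ⟨h1, h2⟩ | ⟨h1, h2⟩
  · exact h2 (h1.tail ⟨ep_nn e, chic_sub M α ω _ h1,
      (chic_sub M α ω _ h1).tail (occ_of M hd α hω (ep_nn e) hc)⟩)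
  · have hnn' : |(ep2 e).1 - (ep1 e).1| + |(ep2 e).2 - (ep1 e).2| = 1 := by
      rw [abs_sub_comm, abs_sub_comm ((ep2 e).2)]
      exact ep_nn e
    have hU' : M.U s(emb d (ep2 e), emb d (ep1 e)) ω ≤ p0 := by
      rw [Sym2.eq_swap]
      exact hc
    exact h2 (h1.tail ⟨hnn', chic_sub M α ω _ h1,
      (chic_sub M α ω _ h1).tail (occ_of M hd α hω hnn' hU')⟩)

/-- the blocking-walk events -/
noncomputable def EvWalk (K : ℕ) (s : List (Fin 8)) : Set M.Ω :=
  if (walkFrom (((K : ℤ), 0), false) s).Nodup ∧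
      K + 2 ≤ (walkFrom (((K : ℤ), 0), false) s).length
  then ⋂ e ∈ (walkFrom (((K : ℤ), 0), false) s).toFinset, (M.U (esym d e)) ⁻¹' (Set.Ioi p0)
  else ∅

lemma EvWalk_meas (K : ℕ) (s : List (Fin 8)) : MeasurableSet (EvWalk M K s) := by
  rw [EvWalk]
  split
  · exact MeasurableSet.biInter ((walkFrom (((K : ℤ), 0), false) s).toFinset :
      Finset EC).countable_toSet (fun e _ => (M.hU_meas (esym d e)) measurableSet_Ioi)
  · exact MeasurableSet.empty

lemma EvWalk_bound (hd : 2 ≤ d) (K : ℕ) (s : List (Fin 8)) :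
    M.μ (EvWalk M K s) ≤
      if K + 1 ≤ s.length then ENNReal.ofReal (1 / 10000) ^ (s.length + 1) else 0 := by
  rw [EvWalk]
  split_ifs with h h2
  · obtain ⟨hnd, hlen⟩ := h
    rw [mu_inter M hd, List.toFinset_card_of_nodup hnd, walkFrom_length]
  · exfalso
    have := walkFrom_length ((((K : ℤ), 0)), false) s
    omega
  · simp
  · simp

end ModelPart


section Final

variable {d : ℕ} {β : ℝ} (M : Model d β)

noncomputable def BAD : Set M.Ω :=
  NW M ∪ ⋃ j : ℕ × (Σ n : ℕ, Fin n → Fin 8), EvWalk M j.1 (List.ofFn j.2.2)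

lemma BAD_meas : MeasurableSet (BAD M) :=
  (NW_meas M).union (MeasurableSet.iUnion fun j => EvWalk_meas M _ _)

lemma BAD_lt_one (hd : 2 ≤ d) : M.μ (BAD M) < 1 := by
  haveI := M.hprob
  set q : ℝ≥0∞ := ENNReal.ofReal (1 / 10000) with hqdef
  have h8q : (8 : ℝ≥0∞) * q = ENNReal.ofReal (8 / 10000) := by
    rw [hqdef, show ((8 : ℝ≥0∞)) = ENNReal.ofReal 8 from (ENNReal.ofReal_ofNat 8).symm,
      ← ENNReal.ofReal_mul (by norm_num)]
    norm_num
  have h2inv : ((2 : ℝ≥0∞))⁻¹ = ENNReal.ofReal (1 / 2) := by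
    rw [show (1 : ℝ) / 2 = (2 : ℝ)⁻¹ by norm_num, ENNReal.ofReal_inv_of_pos (by norm_num),
      ENNReal.ofReal_ofNat]
  have hq8 : (8 : ℝ≥0∞) * q ≤ 2⁻¹ := by
    rw [h8q, h2inv]
    exact ENNReal.ofReal_le_ofReal (by norm_num)
  have hG : (1 - 8 * q)⁻¹ ≤ 2 := by
    rw [show (2 : ℝ≥0∞) = (2⁻¹)⁻¹ by simp, ENNReal.inv_le_inv]
    rw [← ENNReal.one_sub_inv_two]
    exact tsub_le_tsub_left hq8 1
  -- the total mass of the union bound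
  have hsum : ∑' j : ℕ × (Σ n : ℕ, Fin n → Fin 8), M.μ (EvWalk M j.1 (List.ofFn j.2.2))
      ≤ q * (8 * q) * (2 * 2) := by
    have hstep1 : ∑' j : ℕ × (Σ n : ℕ, Fin n → Fin 8), M.μ (EvWalk M j.1 (List.ofFn j.2.2))
        ≤ ∑' j : ℕ × (Σ n : ℕ, Fin n → Fin 8),
          (if j.1 + 1 ≤ j.2.1 then q ^ (j.2.1 + 1) else 0) := by
      refine ENNReal.tsum_le_tsum (fun j => ?_)
      have h := EvWalk_bound M hd j.1 (List.ofFn j.2.2)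
      rwa [List.length_ofFn] at h
    refine le_trans hstep1 ?_
    rw [ENNReal.tsum_prod']
    have hinner : ∀ K : ℕ, ∑' σ : Σ n : ℕ, Fin n → Fin 8,
        (if K + 1 ≤ σ.1 then q ^ (σ.1 + 1) else 0)
        = q * (((8 : ℝ≥0∞) * q) ^ (K + 1) * (1 - 8 * q)⁻¹) := by
      intro K
      rw [ENNReal.tsum_sigma']
      have h1 : ∀ n : ℕ, ∑' _f : Fin n → Fin 8, (if K + 1 ≤ n then q ^ (n + 1) else 0)
          = (8 : ℝ≥0∞) ^ n * (if K + 1 ≤ n then q ^ (n + 1) else 0) := by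
        intro n
        rw [tsum_fintype, Finset.sum_const, Finset.card_univ, Fintype.card_fun,
          Fintype.card_fin, Fintype.card_fin, nsmul_eq_mul]
        push_cast
        ring
      rw [tsum_congr h1]
      have h2 : ∀ n : ℕ, (8 : ℝ≥0∞) ^ n * (if K + 1 ≤ n then q ^ (n + 1) else 0)
          = q * (if K + 1 ≤ n then ((8 : ℝ≥0∞) * q) ^ n else 0) := by
        intro n
        split_ifs with h
        · rw [mul_pow, pow_succ]
          ring
        · simp
      rw [tsum_congr h2, ENNReal.tsum_mul_left, tsum_tail, ENNReal.tsum_geometric]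
    rw [tsum_congr hinner]
    have h3 : ∀ K : ℕ, q * (((8 : ℝ≥0∞) * q) ^ (K + 1) * (1 - 8 * q)⁻¹)
        = (q * ((8 : ℝ≥0∞) * q) * (1 - 8 * q)⁻¹) * ((8 : ℝ≥0∞) * q) ^ K := by
      intro K
      rw [pow_succ]
      ring
    rw [tsum_congr h3, ENNReal.tsum_mul_left, ENNReal.tsum_geometric]
    calc q * (8 * q) * (1 - 8 * q)⁻¹ * (1 - 8 * q)⁻¹
        ≤ q * (8 * q) * 2 * 2 := by gcongr
      _ = q * (8 * q) * (2 * 2) := by ring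
  -- conclude
  have hms : M.μ (BAD M) ≤ 0 + q * (8 * q) * (2 * 2) := by
    refine le_trans (measure_union_le _ _) ?_
    gcongr
    · exact le_of_eq (NW_null M)
    · exact le_trans (measure_iUnion_le _) hsum
  rw [zero_add] at hms
  refine lt_of_le_of_lt hms ?_
  have hval : q * (8 * q) * (2 * 2) = ENNReal.ofReal ((1 / 10000) * (8 / 10000) * 4) := by
    rw [h8q, hqdef, show ((2 : ℝ≥0∞) * 2) = ENNReal.ofReal 4 by
        rw [show ((2 : ℝ≥0∞)) = ENNReal.ofReal 2 from (ENNReal.ofReal_ofNat 2).symm,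
          ← ENNReal.ofReal_mul (by norm_num)]
        norm_num,
      ← ENNReal.ofReal_mul (by norm_num), ← ENNReal.ofReal_mul (by positivity)]
  rw [hval]
  rw [ENNReal.ofReal_lt_one]
  norm_num

end Final

/-- Theorem 3.1(a): if `min {α, βα} > d` and `d ≥ 2`, then
`λ_c(α) < ∞`, i.e. there exists `λ ∈ (0,∞)` with `θ(λ,α) > 0`. -/
theorem statement_0 (d : ℕ) (β α : ℝ) (hd : 2 ≤ d) (hβ : 0 < β)
    (hα : (d : ℝ) < min α (β * α)) (M : Model d β) :
    ∃ lam : ℝ, 0 < lam ∧ 0 < theta M lam α := by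
  classical
  haveI := M.hprob
  refine ⟨lam0, lam0_pos, ?_⟩
  have hsubset : (BAD M)ᶜ ⊆ {ω | (cluster M lam0 α ω 0).Infinite} := by
    intro ω hω
    rw [Set.mem_compl_iff, BAD, Set.mem_union, not_or] at hω
    obtain ⟨hωN, hωU⟩ := hω
    rw [Set.mem_setOf_eq]
    by_contra hfin
    rw [Set.not_infinite] at hfin
    have hχfin : {z : Peierls.Cell | chic M α ω z}.Finite := by
      refine Set.Finite.subset (Set.Finite.preimage (fun x _ y _ h => emb_injective hd h) hfin)
        ?_
      intro z hz
      exact chic_sub M α ω z hz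
    obtain ⟨K, t, hK0, hchain, hnodup, hbd, hlen⟩ :=
      Peierls.exists_blocking_chain (chic M α ω) hχfin (chic_zero M α ω) (chic_conn M α ω)
    obtain ⟨s, hs⟩ := Peierls.walkFrom_exists t ((K, 0), false) hchain
    apply hωU
    rw [Set.mem_iUnion]
    refine ⟨(K.toNat, ⟨s.length, s.get⟩), ?_⟩
    rw [EvWalk]
    have hKcast : ((K.toNat : ℤ)) = K := Int.toNat_of_nonneg hK0
    rw [List.ofFn_get, hKcast, hs]
    rw [if_pos ⟨hnodup, by simp only [List.length_cons] at hlen ⊢; omega⟩]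
    refine Set.mem_iInter₂.mpr fun e he => ?_
    rw [List.mem_toFinset] at he
    exact Set.mem_Ioi.mpr (bd_closed M hd α hωN (hbd e he))
  have h2 : M.μ (BAD M)ᶜ = 1 - M.μ (BAD M) := prob_compl_eq_one_sub (BAD_meas M)
  have h3 : 0 < M.μ (BAD M)ᶜ := by
    rw [h2]
    exact tsub_pos_of_lt (BAD_lt_one M hd)
  have h4 : 0 < M.μ {ω | (cluster M lam0 α ω 0).Infinite} :=
    lt_of_lt_of_le h3 (measure_mono hsubset)
  rw [theta]
  exact ENNReal.toReal_pos (ne_of_gt h4) (measure_ne_top _ _)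

end InhomLRP
end

section
/- Assume min{α, βα} > d. Then for every δ ∈ (0, α(β∧1) − d) there exist t_0 ≥ 1 and a constant c_1 > 0 such that for all real t ≥ t_0 and all real s ≥ 1, P[there exist x, y ∈ ([0,s−1]^d ∩ ℤ^d) with |x−y| > t such that the edge (x,y) is occupied] ≤ c_1 s^d t^{d − α(β∧1) + δ}. -/
open MeasureTheory ProbabilityTheory Real Set

namespace InhomLRP

variable {d : ℕ} {β : ℝ}

/-! ### Auxiliary material -/

section Aux

open scoped ENNReal NNReal

/-- `1 + ∫_1^∞ t^{-p} dt` as an extended nonnegative real constant. -/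
noncomputable def Jtail (p : ℝ) : ℝ≥0∞ :=
  1 + ∫⁻ t in Set.Ioi (1 : ℝ), ENNReal.ofReal (t ^ (-p))

lemma Jtail_lt_top {p : ℝ} (hp : 1 < p) : Jtail p < ⊤ := by
  have hint : IntegrableOn (fun t : ℝ => t ^ (-p)) (Set.Ioi 1) :=
    integrableOn_Ioi_rpow_of_lt (by linarith) one_pos
  exact ENNReal.add_lt_top.mpr ⟨ENNReal.one_lt_top, hint.setLIntegral_lt_top⟩

lemma lintegral_le_Jtail {Ω : Type*} [MeasurableSpace Ω] (μ : Measure Ω)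
    [IsProbabilityMeasure μ] {f : Ω → ℝ} (hm : AEMeasurable f μ) (hnn : 0 ≤ᵐ[μ] f) {p : ℝ}
    (htail : ∀ t : ℝ, 1 < t → μ {a | t < f a} ≤ ENNReal.ofReal (t ^ (-p))) :
    ∫⁻ ω, ENNReal.ofReal (f ω) ∂μ ≤ Jtail p := by
  rw [lintegral_eq_lintegral_meas_lt μ hnn hm]
  have hsplit : (Set.Ioi (0 : ℝ)) = Set.Ioc 0 1 ∪ Set.Ioi 1 :=
    (Set.Ioc_union_Ioi_eq_Ioi zero_le_one).symm
  rw [hsplit, lintegral_union measurableSet_Ioi (Set.Ioc_disjoint_Ioi le_rfl)]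
  have h1 : ∫⁻ t in Set.Ioc (0:ℝ) 1, μ {a | t < f a} ≤ 1 := by
    calc ∫⁻ t in Set.Ioc (0:ℝ) 1, μ {a | t < f a}
        ≤ ∫⁻ _ in Set.Ioc (0:ℝ) 1, 1 := lintegral_mono fun t => prob_le_one
      _ = 1 := by simp [Real.volume_Ioc]
  have h2 : ∫⁻ t in Set.Ioi (1:ℝ), μ {a | t < f a}
      ≤ ∫⁻ t in Set.Ioi (1:ℝ), ENNReal.ofReal (t ^ (-p)) := by
    apply setLIntegral_mono (by fun_prop) (fun t ht => htail t ht)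
  exact add_le_add h1 h2

/-- The Euclidean norm of a lattice vector. -/
noncomputable def nrm {d : ℕ} (z : V d) : ℝ := Real.sqrt (∑ i, ((z i : ℝ)) ^ 2)

lemma nrm_nonneg {d : ℕ} (z : V d) : 0 ≤ nrm z := Real.sqrt_nonneg _

lemma edist_eq_nrm {d : ℕ} (x y : V d) : edist x y = nrm (x - y) := by
  unfold edist nrm
  congr 1
  refine Finset.sum_congr rfl fun i _ => ?_
  have : ((x - y) i : ℝ) = (x i : ℝ) - (y i : ℝ) := by
    simp [Pi.sub_apply]
  rw [this]

lemma abs_coord_le_nrm {d : ℕ} (z : V d) (i : Fin d) : |(z i : ℝ)| ≤ nrm z := by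
  rw [← Real.sqrt_sq_eq_abs]
  exact Real.sqrt_le_sqrt <|
    Finset.single_le_sum (f := fun j => ((z j : ℝ)) ^ 2) (fun j _ => sq_nonneg _)
      (Finset.mem_univ i)

lemma one_le_nrm {d : ℕ} {z : V d} (h : z ≠ 0) : 1 ≤ nrm z := by
  obtain ⟨i, hi⟩ : ∃ i, z i ≠ 0 := by
    by_contra hc
    push_neg at hc
    exact h (funext hc)
  have h1 : (1 : ℝ) ≤ |(z i : ℝ)| := by
    have := Int.one_le_abs hi
    calc (1:ℝ) ≤ ((|z i| : ℤ) : ℝ) := by exact_mod_cast this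
      _ = |(z i : ℝ)| := by push_cast; ring
  exact h1.trans (abs_coord_le_nrm z i)

lemma one_le_edist {d : ℕ} {x y : V d} (h : x ≠ y) : 1 ≤ edist x y := by
  rw [edist_eq_nrm]
  exact one_le_nrm (sub_ne_zero.mpr h)

lemma mem_box_of_nrm_le {d : ℕ} {R : ℝ} {z : V d} (hz : nrm z ≤ R) :
    z ∈ Fintype.piFinset (fun _ : Fin d => Finset.Icc (-⌈R⌉) ⌈R⌉) := by
  rw [Fintype.mem_piFinset]
  intro i
  rw [Finset.mem_Icc]
  have h1 : |(z i : ℝ)| ≤ R := (abs_coord_le_nrm z i).trans hz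
  rw [abs_le] at h1
  constructor
  · have : -(⌈R⌉ : ℝ) ≤ (z i : ℝ) := le_trans (by linarith [Int.le_ceil R]) h1.1
    exact_mod_cast this
  · have : (z i : ℝ) ≤ (⌈R⌉ : ℝ) := h1.2.trans (Int.le_ceil R)
    exact_mod_cast this

lemma card_box_le {d : ℕ} {R : ℝ} (hR : 1 ≤ R) :
    ((Fintype.piFinset (fun _ : Fin d => Finset.Icc (-⌈R⌉) ⌈R⌉)).card : ℝ) ≤ (5 * R) ^ d := by
  rw [Fintype.card_piFinset]
  have hcard : ∀ i : Fin d, ((Finset.Icc (-⌈R⌉) ⌈R⌉).card : ℝ) ≤ 5 * R := by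
    intro i
    rw [Int.card_Icc]
    have hceil : (⌈R⌉ : ℝ) ≤ R + 1 := by linarith [Int.ceil_lt_add_one R]
    have hceil0 : (0:ℤ) ≤ ⌈R⌉ := by positivity
    have h1 : (((⌈R⌉ + 1 - -⌈R⌉).toNat : ℤ) : ℝ) = 2 * (⌈R⌉:ℝ) + 1 := by
      have : ((⌈R⌉ + 1 - -⌈R⌉).toNat : ℤ) = 2 * ⌈R⌉ + 1 := by omega
      exact_mod_cast congrArg (fun n : ℤ => (n : ℝ)) this
    rw [show (((⌈R⌉ + 1 - -⌈R⌉).toNat : ℕ) : ℝ) = (((⌈R⌉ + 1 - -⌈R⌉).toNat : ℤ) : ℝ) by push_cast; ring, h1]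
    linarith
  calc ((∏ i : Fin d, (Finset.Icc (-⌈R⌉) ⌈R⌉).card : ℕ) : ℝ)
      = ∏ i : Fin d, ((Finset.Icc (-⌈R⌉) ⌈R⌉).card : ℝ) := by push_cast; ring
    _ ≤ ∏ _i : Fin d, (5 * R) := Finset.prod_le_prod (fun i _ => by positivity) (fun i _ => hcard i)
    _ = (5 * R) ^ d := by simp [Finset.prod_const]

/-- The lattice tail sum bound: `∑_{|z| > t} |z|^{-q} ≤ 10^d (1-2^{d-q})⁻¹ t^{d-q}`. -/
lemma tsum_tail_le {d : ℕ} {q t : ℝ} (hq : (d : ℝ) < q) (ht : 1 ≤ t) :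
    ∑' z : V d, (if t < nrm z then ENNReal.ofReal (nrm z ^ (-q)) else 0) ≤
      ENNReal.ofReal ((10 : ℝ) ^ d) * (1 - ENNReal.ofReal ((2 : ℝ) ^ ((d : ℝ) - q)))⁻¹ *
        ENNReal.ofReal (t ^ ((d : ℝ) - q)) := by
  have ht0 : (0:ℝ) < t := lt_of_lt_of_le one_pos ht
  set F : V d → ℝ≥0∞ := fun z => if t < nrm z then ENNReal.ofReal (nrm z ^ (-q)) else 0 with hF
  set G : ℕ → V d → ℝ≥0∞ := fun k z =>
    if nrm z ≤ 2 ^ (k+1) * t ∧ 2 ^ k * t < nrm z then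
      ENNReal.ofReal ((2 ^ k * t) ^ (-q)) else 0 with hG
  have hpt : ∀ z, F z ≤ ∑' k, G k z := by
    intro z
    by_cases h : t < nrm z
    · have hex : ∃ k : ℕ, nrm z ≤ 2 ^ (k+1) * t := by
        obtain ⟨n, hn⟩ := exists_nat_ge (nrm z)
        refine ⟨n, hn.trans ?_⟩
        have h1 : (n : ℝ) ≤ 2 ^ n := by
          exact_mod_cast Nat.le_of_lt (Nat.lt_two_pow_self (n := n))
        have h2 : (2:ℝ) ^ n ≤ 2 ^ (n+1) := by
          apply pow_le_pow_right₀ one_le_two (Nat.le_succ n)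
        nlinarith [pow_pos (by norm_num : (0:ℝ) < 2) (n+1)]
      set k := Nat.find hex with hk
      have hk1 : nrm z ≤ 2 ^ (k+1) * t := Nat.find_spec hex
      have hk2 : 2 ^ k * t < nrm z := by
        rcases Nat.eq_zero_or_pos k with h0 | h0
        · rw [h0]; simpa using h
        · have hmin := Nat.find_min hex (m := k - 1) (by omega)
          push_neg at hmin
          have hkk : k - 1 + 1 = k := by omega
          rwa [hkk] at hmin
      have hGk : G k z = ENNReal.ofReal ((2 ^ k * t) ^ (-q)) := by
        simp only [hG]; rw [if_pos ⟨hk1, hk2⟩]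
      have hFz : F z = ENNReal.ofReal (nrm z ^ (-q)) := by
        simp only [hF]; rw [if_pos h]
      have hmono : nrm z ^ (-q) ≤ (2 ^ k * t) ^ (-q) := by
        apply Real.rpow_le_rpow_of_nonpos
        · positivity
        · exact hk2.le
        · linarith [lt_of_le_of_lt (Nat.cast_nonneg d) hq]
      calc F z = ENNReal.ofReal (nrm z ^ (-q)) := hFz
        _ ≤ G k z := by rw [hGk]; exact ENNReal.ofReal_le_ofReal hmono
        _ ≤ ∑' k, G k z := ENNReal.le_tsum k
    · have : F z = 0 := by simp only [hF]; rw [if_neg h]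
      rw [this]; exact zero_le
  calc ∑' z, F z ≤ ∑' z, ∑' k, G k z := ENNReal.tsum_le_tsum hpt
    _ = ∑' k, ∑' z, G k z := ENNReal.tsum_comm
    _ ≤ ∑' k : ℕ, ENNReal.ofReal ((5 * (2 ^ (k+1) * t)) ^ d) *
          ENNReal.ofReal ((2 ^ k * t) ^ (-q)) := by
        apply ENNReal.tsum_le_tsum
        intro k
        set R : ℝ := 2 ^ (k+1) * t with hR
        have hR1 : 1 ≤ R := by
          have h1 : (1:ℝ) ≤ 2 ^ (k+1) := one_le_pow₀ one_le_two
          nlinarith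
        set Fb := Fintype.piFinset (fun _ : Fin d => Finset.Icc (-⌈R⌉) ⌈R⌉) with hFb
        have hsupp : ∀ z ∉ Fb, G k z = 0 := by
          intro z hz
          simp only [hG]
          rw [if_neg]
          rintro ⟨h1, _⟩
          exact hz (mem_box_of_nrm_le h1)
        rw [tsum_eq_sum hsupp]
        calc ∑ z ∈ Fb, G k z ≤ ∑ _z ∈ Fb, ENNReal.ofReal ((2 ^ k * t) ^ (-q)) := by
              apply Finset.sum_le_sum
              intro z _
              simp only [hG]
              split_ifs
              exacts [le_rfl, zero_le]
            _ = Fb.card * ENNReal.ofReal ((2 ^ k * t) ^ (-q)) := by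
              rw [Finset.sum_const, nsmul_eq_mul]
            _ ≤ ENNReal.ofReal ((5 * R) ^ d) * ENNReal.ofReal ((2 ^ k * t) ^ (-q)) := by
              apply mul_le_mul_left
              rw [← ENNReal.ofReal_natCast]
              exact ENNReal.ofReal_le_ofReal (card_box_le hR1)
    _ ≤ ∑' k : ℕ, ENNReal.ofReal ((10:ℝ) ^ d * t ^ ((d:ℝ) - q)) *
          ENNReal.ofReal ((2:ℝ) ^ ((d:ℝ) - q)) ^ k := by
        apply ENNReal.tsum_le_tsum
        intro k
        have h2k : (0:ℝ) < 2 ^ k := by positivity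
        have e2 : ((2:ℝ) ^ k * t) ^ (-q) = ((2:ℝ) ^ k) ^ (-q) * t ^ (-q) :=
          Real.mul_rpow (by positivity) (by positivity)
        have e3 : (t:ℝ) ^ d * t ^ (-q) = t ^ ((d:ℝ) - q) := by
          rw [← Real.rpow_natCast t d, ← Real.rpow_add ht0]
          congr 1 <;> ring
        have l1 : ((2:ℝ) ^ k) ^ d * ((2:ℝ) ^ k) ^ (-q) = (2:ℝ) ^ ((k:ℝ) * ((d:ℝ) - q)) := by
          rw [← Real.rpow_natCast ((2:ℝ) ^ k) d, ← Real.rpow_add h2k,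
            ← Real.rpow_natCast (2:ℝ) k, ← Real.rpow_mul (by norm_num : (0:ℝ) ≤ 2)]
          congr 1 <;> ring
        have l2 : ((2:ℝ) ^ ((d:ℝ) - q)) ^ k = (2:ℝ) ^ ((k:ℝ) * ((d:ℝ) - q)) := by
          rw [← Real.rpow_natCast ((2:ℝ) ^ ((d:ℝ) - q)) k,
            ← Real.rpow_mul (by norm_num : (0:ℝ) ≤ 2)]
          congr 1 <;> ring
        have key : (5 * (2 ^ (k+1) * t)) ^ d * ((2:ℝ) ^ k * t) ^ (-q)
            = (10:ℝ) ^ d * t ^ ((d:ℝ) - q) * ((2:ℝ) ^ ((d:ℝ) - q)) ^ k := by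
          calc (5 * (2 ^ (k+1) * t)) ^ d * ((2:ℝ) ^ k * t) ^ (-q)
              = (10:ℝ) ^ d * (((2:ℝ) ^ k) ^ d * ((2:ℝ) ^ k) ^ (-q)) *
                  ((t:ℝ) ^ d * t ^ (-q)) := by rw [e2]; ring
            _ = (10:ℝ) ^ d * t ^ ((d:ℝ) - q) * ((2:ℝ) ^ ((d:ℝ) - q)) ^ k := by
                rw [l1, e3, l2]; ring
        rw [← ENNReal.ofReal_pow (by positivity), ← ENNReal.ofReal_mul (by positivity),
          ← ENNReal.ofReal_mul (by positivity)]
        exact ENNReal.ofReal_le_ofReal key.le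
    _ = ENNReal.ofReal ((10 : ℝ) ^ d) * (1 - ENNReal.ofReal ((2 : ℝ) ^ ((d : ℝ) - q)))⁻¹ *
        ENNReal.ofReal (t ^ ((d : ℝ) - q)) := by
      rw [ENNReal.tsum_mul_left, ENNReal.tsum_geometric,
        ENNReal.ofReal_mul (by positivity)]
      ring

section ModelFacts

variable {d : ℕ} {β : ℝ}

lemma Model.W_ae_one (M : Model d β) (x : V d) : ∀ᵐ ω ∂M.μ, 1 ≤ M.W x ω := by
  rw [MeasureTheory.ae_iff]
  have hsub : {ω | ¬ 1 ≤ M.W x ω} ⊆ ⋃ n : ℕ, {ω | M.W x ω ≤ 1 - 1/(n+1)} := by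
    intro ω hω
    simp only [Set.mem_setOf_eq, not_le] at hω
    obtain ⟨n, hn⟩ := exists_nat_one_div_lt (show 0 < 1 - M.W x ω by linarith)
    refine Set.mem_iUnion.mpr ⟨n, ?_⟩
    simp only [Set.mem_setOf_eq]
    linarith
  have hU0 : M.μ (⋃ n : ℕ, {ω | M.W x ω ≤ 1 - 1/(n+1)}) = 0 := by
    apply measure_iUnion_null
    intro n
    rw [M.hPareto x (1 - 1/(n+1)), if_neg]
    have : (0:ℝ) < 1/(n+1) := by positivity
    linarith
  exact measure_mono_null hsub hU0

lemma Model.tail_W (M : Model d β) (hβ : 0 < β) (x : V d) {w : ℝ} (hw : 1 ≤ w) :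
    M.μ {ω | w < M.W x ω} ≤ ENNReal.ofReal (w ^ (-β)) := by
  haveI := M.hprob
  have hm : MeasurableSet {ω | M.W x ω ≤ w} := measurableSet_le (M.hW_meas x) measurable_const
  have hc : {ω | w < M.W x ω} = {ω | M.W x ω ≤ w}ᶜ := by ext ω; simp [not_le]
  rw [hc, measure_compl hm (measure_ne_top _ _), measure_univ, M.hPareto x w, if_pos hw]
  have h1 : w ^ (-β) ≤ 1 := Real.rpow_le_one_of_one_le_of_nonpos hw (by linarith)
  have h0 : (0:ℝ) ≤ w ^ (-β) := Real.rpow_nonneg (by linarith) _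
  rw [tsub_le_iff_right, ← ENNReal.ofReal_add h0 (by linarith),
    show w ^ (-β) + (1 - w ^ (-β)) = 1 by ring, ENNReal.ofReal_one]

lemma Model.U_ae_pos (M : Model d β) (e : Sym2 (V d)) : ∀ᵐ ω ∂M.μ, 0 < M.U e ω := by
  rw [MeasureTheory.ae_iff]
  have h : {ω | ¬ 0 < M.U e ω} = {ω | M.U e ω ≤ 0} := by ext ω; simp [not_lt]
  rw [h, M.hUnif e 0 ⟨le_rfl, zero_le_one⟩, ENNReal.ofReal_zero]

lemma Model.lintegral_W (M : Model d β) (hβ : 0 < β) {γ : ℝ} (hγ0 : 0 < γ) (x : V d) :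
    ∫⁻ ω, ENNReal.ofReal (max (M.W x ω) 1) ^ γ ∂M.μ ≤ Jtail (β/γ) := by
  haveI := M.hprob
  have hb : ∀ ω, (0:ℝ) ≤ max (M.W x ω) 1 := fun ω => le_trans zero_le_one (le_max_right _ _)
  have heq : ∀ ω, ENNReal.ofReal (max (M.W x ω) 1) ^ γ
      = ENNReal.ofReal ((max (M.W x ω) 1) ^ γ) := fun ω =>
    ENNReal.ofReal_rpow_of_nonneg (hb ω) hγ0.le
  simp_rw [heq]
  apply lintegral_le_Jtail
  · exact (((M.hW_meas x).max measurable_const).pow measurable_const).aemeasurable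
  · exact Filter.Eventually.of_forall fun ω => Real.rpow_nonneg (hb ω) _
  · intro t ht
    have htpos : (0:ℝ) < t := lt_trans one_pos ht
    have hw1 : 1 ≤ t ^ (1/γ) := Real.one_le_rpow ht.le (by positivity)
    have hsub : {a | t < (max (M.W x a) 1) ^ γ} ⊆ {a | t ^ (1/γ) < M.W x a} := by
      intro a ha
      simp only [Set.mem_setOf_eq] at ha ⊢
      have h2 : t ^ (1/γ) < max (M.W x a) 1 := by
        rw [one_div, Real.rpow_inv_lt_iff_of_pos htpos.le (hb a) hγ0]
        exact ha
      rcases lt_max_iff.mp h2 with h3 | h3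
      · exact h3
      · exact absurd h3 (not_lt.mpr hw1)
    calc M.μ {a | t < (max (M.W x a) 1) ^ γ} ≤ M.μ {a | t ^ (1/γ) < M.W x a} :=
          measure_mono hsub
      _ ≤ ENNReal.ofReal ((t ^ (1/γ)) ^ (-β)) := M.tail_W hβ x hw1
      _ = ENNReal.ofReal (t ^ (-(β/γ))) := by
          rw [← Real.rpow_mul htpos.le]
          congr 1
          ring

lemma Model.lintegral_U (M : Model d β) {γ : ℝ} (hγ0 : 0 < γ) (e : Sym2 (V d)) :
    ∫⁻ ω, ENNReal.ofReal (M.U e ω) ^ (-γ) ∂M.μ ≤ Jtail (1/γ) := by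
  haveI := M.hprob
  have hae : ∫⁻ ω, ENNReal.ofReal (M.U e ω) ^ (-γ) ∂M.μ
      = ∫⁻ ω, ENNReal.ofReal ((max (M.U e ω) 0) ^ (-γ)) ∂M.μ := by
    apply lintegral_congr_ae
    filter_upwards [M.U_ae_pos e] with ω hω
    rw [max_eq_left hω.le, ENNReal.ofReal_rpow_of_pos hω]
  rw [hae]
  apply lintegral_le_Jtail
  · exact (((M.hU_meas e).max measurable_const).pow measurable_const).aemeasurable
  · exact Filter.Eventually.of_forall fun ω => Real.rpow_nonneg (le_max_right _ _) _
  · intro t ht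
    have htpos : (0:ℝ) < t := lt_trans one_pos ht
    have hsub : {a | t < (max (M.U e a) 0) ^ (-γ)} ⊆ {a | M.U e a ≤ t ^ (-(1/γ))} := by
      intro a ha
      simp only [Set.mem_setOf_eq] at ha ⊢
      have hm0 : (0:ℝ) ≤ max (M.U e a) 0 := le_max_right _ _
      have hmpos : 0 < max (M.U e a) 0 := by
        rcases hm0.eq_or_lt with h | h
        · exfalso
          rw [← h, Real.zero_rpow (by linarith : -γ ≠ 0)] at ha
          linarith
        · exact h
      have hlt : max (M.U e a) 0 < t ^ (-γ)⁻¹ := by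
        rw [Real.lt_rpow_inv_iff_of_neg hmpos htpos (by linarith : -γ < 0)]
        exact ha
      have := calc M.U e a ≤ max (M.U e a) 0 := le_max_left _ _
        _ < t ^ (-γ)⁻¹ := hlt
        _ = t ^ (-(1/γ)) := by congr 1; field_simp
      exact this.le
    calc M.μ {a | t < (max (M.U e a) 0) ^ (-γ)}
        ≤ M.μ {a | M.U e a ≤ t ^ (-(1/γ))} := measure_mono hsub
      _ = ENNReal.ofReal (t ^ (-(1/γ))) := M.hUnif e _
          ⟨Real.rpow_nonneg htpos.le _,
            Real.rpow_le_one_of_one_le_of_nonpos ht.le (neg_nonpos.mpr (by positivity))⟩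
      _ = ENNReal.ofReal (t ^ (-(1/γ))) := rfl

lemma Model.pair_bound (M : Model d β) (hβ : 0 < β) (lam α γ : ℝ) (hlam : 0 < lam)
    (hγ0 : 0 < γ) {x y : V d} (hxy : x ≠ y) :
    M.μ {ω | occ M lam α x y ω} ≤
      ENNReal.ofReal (lam ^ γ) * Jtail (β/γ) * Jtail (β/γ) * Jtail (1/γ) *
        ENNReal.ofReal (edist x y ^ (-(α * γ))) := by
  haveI := M.hprob
  set r := edist x y with hrdef
  have hr1 : (1:ℝ) ≤ r := one_le_edist hxy
  have hr0 : (0:ℝ) < r := lt_of_lt_of_le one_pos hr1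
  have hrα : (0:ℝ) < r ^ α := Real.rpow_pos_of_pos hr0 α
  set z := lam / r ^ α with hzdef
  have hz0 : 0 < z := div_pos hlam hrα
  set Fx : M.Ω → ℝ≥0∞ := fun ω => ENNReal.ofReal (max (M.W x ω) 1) ^ γ with hFx
  set Fy : M.Ω → ℝ≥0∞ := fun ω => ENNReal.ofReal (max (M.W y ω) 1) ^ γ with hFy
  set G : M.Ω → ℝ≥0∞ := fun ω => ENNReal.ofReal (M.U s(x, y) ω) ^ (-γ) with hGdef
  set X : M.Ω → ℝ≥0∞ := fun ω => ENNReal.ofReal z ^ γ * (Fx ω * Fy ω * G ω) with hX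
  have hFxm : Measurable Fx :=
    (((M.hW_meas x).max measurable_const).ennreal_ofReal).pow measurable_const
  have hFym : Measurable Fy :=
    (((M.hW_meas y).max measurable_const).ennreal_ofReal).pow measurable_const
  have hGm : Measurable G :=
    ((M.hU_meas s(x, y)).ennreal_ofReal).pow measurable_const
  have hXm : Measurable X := (((hFxm.mul hFym).mul hGm)).const_mul _
  -- Step 1: a.e. inclusion of the occupation event in `{1 ≤ X}`
  have hsub : ∀ᵐ ω ∂M.μ, ω ∈ {ω | occ M lam α x y ω} → ω ∈ {ω | 1 ≤ X ω} := by
    filter_upwards [M.W_ae_one x, M.W_ae_one y] with ω hWx hWy hocc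
    obtain ⟨hne, hU⟩ := hocc
    have hexp : 1 - Real.exp (-(lam * M.W x ω * M.W y ω) / r ^ α)
        ≤ lam * M.W x ω * M.W y ω / r ^ α := by
      have h := Real.add_one_le_exp (-(lam * M.W x ω * M.W y ω / r ^ α))
      have heq : -(lam * M.W x ω * M.W y ω) / r ^ α
          = -(lam * M.W x ω * M.W y ω / r ^ α) := by ring
      rw [heq]
      linarith
    set u := M.U s(x, y) ω with hu
    set a := max (M.W x ω) 1 with hadef
    set b := max (M.W y ω) 1 with hbdef
    have ha : a = M.W x ω := max_eq_left hWx
    have hb : b = M.W y ω := max_eq_left hWy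
    have ha1 : (1:ℝ) ≤ a := le_max_right _ _
    have hb1 : (1:ℝ) ≤ b := le_max_right _ _
    have ha0 : (0:ℝ) < a := lt_of_lt_of_le one_pos ha1
    have hb0 : (0:ℝ) < b := lt_of_lt_of_le one_pos hb1
    have hab : u ≤ z * (a * b) := by
      have h1 : lam * M.W x ω * M.W y ω / r ^ α = z * (M.W x ω * M.W y ω) := by
        rw [hzdef]; ring
      calc u ≤ 1 - Real.exp (-(lam * M.W x ω * M.W y ω) / r ^ α) := hU
        _ ≤ lam * M.W x ω * M.W y ω / r ^ α := hexp
        _ = z * (M.W x ω * M.W y ω) := h1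
        _ = z * (a * b) := by rw [ha, hb]
    show 1 ≤ X ω
    by_cases hu0 : u ≤ 0
    · have hGtop : G ω = ⊤ := by
        simp only [hGdef, ← hu]
        rw [ENNReal.ofReal_eq_zero.mpr hu0, ENNReal.zero_rpow_of_neg (by linarith)]
      have hFxpos : Fx ω ≠ 0 := by
        simp only [hFx]
        exact (ENNReal.rpow_pos (ENNReal.ofReal_pos.mpr ha0) ENNReal.ofReal_ne_top).ne'
      have hFypos : Fy ω ≠ 0 := by
        simp only [hFy]
        exact (ENNReal.rpow_pos (ENNReal.ofReal_pos.mpr hb0) ENNReal.ofReal_ne_top).ne'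
      have hc0 : (ENNReal.ofReal z) ^ γ ≠ 0 :=
        (ENNReal.rpow_pos (ENNReal.ofReal_pos.mpr hz0) ENNReal.ofReal_ne_top).ne'
      have hXtop : X ω = ⊤ := by
        simp only [hX]
        rw [hGtop, ENNReal.mul_top (mul_ne_zero hFxpos hFypos), ENNReal.mul_top hc0]
      rw [hXtop]
      exact le_top
    · push_neg at hu0
      have h1 : 1 ≤ z * (a * b) / u := (one_le_div hu0).mpr hab
      have h2 : 1 ≤ (z * (a * b) / u) ^ γ := Real.one_le_rpow h1 hγ0.le
      have hreal : (z * (a * b) / u) ^ γ = z ^ γ * (a ^ γ * b ^ γ * u ^ (-γ)) := by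
        rw [Real.div_rpow (by positivity) hu0.le, Real.mul_rpow hz0.le (by positivity),
          Real.mul_rpow ha0.le hb0.le, Real.rpow_neg hu0.le]
        ring
      have hXeq : X ω = ENNReal.ofReal ((z * (a * b) / u) ^ γ) := by
        simp only [hX, hFx, hFy, hGdef, ← hu, ← hadef, ← hbdef]
        rw [ENNReal.ofReal_rpow_of_pos hz0, ENNReal.ofReal_rpow_of_pos ha0,
          ENNReal.ofReal_rpow_of_pos hb0, ENNReal.ofReal_rpow_of_pos hu0,
          ← ENNReal.ofReal_mul (by positivity), ← ENNReal.ofReal_mul (by positivity),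
          ← ENNReal.ofReal_mul (by positivity), hreal]
      rw [hXeq]
      exact ENNReal.one_le_ofReal.mpr h2
  -- Step 2: measure inequality plus Markov
  have hmono : M.μ {ω | occ M lam α x y ω} ≤ M.μ {ω | 1 ≤ X ω} :=
    measure_mono_ae (hsub.mono fun ω h => h)
  have hmarkov : M.μ {ω | 1 ≤ X ω} ≤ ∫⁻ ω, X ω ∂M.μ := by
    have h := mul_meas_ge_le_lintegral₀ (μ := M.μ) hXm.aemeasurable 1
    simpa using h
  -- Step 3: independence factorization
  have hmeas_elim : ∀ i, Measurable (Sum.elim M.W M.U i) := by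
    rintro (v | ee)
    · exact M.hW_meas v
    · exact M.hU_meas ee
  have hiW : IndepFun Fx Fy M.μ := by
    have h := M.hindep.indepFun
      (show (Sum.inl x : V d ⊕ Sym2 (V d)) ≠ Sum.inl y by simp [hxy])
    exact h.comp
      (show Measurable (fun v : ℝ => ENNReal.ofReal (max v 1) ^ γ) from
        ((measurable_id.max measurable_const).ennreal_ofReal).pow measurable_const)
      (show Measurable (fun v : ℝ => ENNReal.ofReal (max v 1) ^ γ) from
        ((measurable_id.max measurable_const).ennreal_ofReal).pow measurable_const)
  have hiU : IndepFun (fun ω => Fx ω * Fy ω) G M.μ := by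
    have h := M.hindep.indepFun_prodMk hmeas_elim (Sum.inl x) (Sum.inl y)
      (Sum.inr s(x, y)) (by simp) (by simp)
    exact h.comp
      (show Measurable (fun p : ℝ × ℝ =>
          ENNReal.ofReal (max p.1 1) ^ γ * ENNReal.ofReal (max p.2 1) ^ γ) from
        (((measurable_fst.max measurable_const).ennreal_ofReal).pow measurable_const).mul
          (((measurable_snd.max measurable_const).ennreal_ofReal).pow measurable_const))
      (show Measurable (fun v : ℝ => ENNReal.ofReal v ^ (-γ)) from
        (measurable_id.ennreal_ofReal).pow measurable_const)
  have hfact : ∫⁻ ω, X ω ∂M.μ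
      = ENNReal.ofReal z ^ γ *
          ((∫⁻ ω, Fx ω ∂M.μ) * (∫⁻ ω, Fy ω ∂M.μ) * (∫⁻ ω, G ω ∂M.μ)) := by
    calc ∫⁻ ω, X ω ∂M.μ
        = ENNReal.ofReal z ^ γ * ∫⁻ ω, Fx ω * Fy ω * G ω ∂M.μ := by
          simp only [hX]
          exact lintegral_const_mul _ ((hFxm.mul hFym).mul hGm)
      _ = ENNReal.ofReal z ^ γ * ((∫⁻ ω, Fx ω * Fy ω ∂M.μ) * ∫⁻ ω, G ω ∂M.μ) := by
          rw [lintegral_mul_eq_lintegral_mul_lintegral_of_indepFun''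
            (f := fun ω => Fx ω * Fy ω) (hFxm.mul hFym).aemeasurable hGm.aemeasurable hiU]
      _ = ENNReal.ofReal z ^ γ *
          ((∫⁻ ω, Fx ω ∂M.μ) * (∫⁻ ω, Fy ω ∂M.μ) * (∫⁻ ω, G ω ∂M.μ)) := by
          rw [lintegral_mul_eq_lintegral_mul_lintegral_of_indepFun''
            hFxm.aemeasurable hFym.aemeasurable hiW]
  have hzγ : (ENNReal.ofReal z) ^ γ
      = ENNReal.ofReal (lam ^ γ) * ENNReal.ofReal (r ^ (-(α * γ))) := by
    rw [ENNReal.ofReal_rpow_of_pos hz0, hzdef, Real.div_rpow hlam.le hrα.le,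
      ← Real.rpow_mul hr0.le, Real.rpow_neg hr0.le, div_eq_mul_inv,
      ENNReal.ofReal_mul (by positivity)]
  calc M.μ {ω | occ M lam α x y ω} ≤ M.μ {ω | 1 ≤ X ω} := hmono
    _ ≤ ∫⁻ ω, X ω ∂M.μ := hmarkov
    _ = ENNReal.ofReal z ^ γ *
          ((∫⁻ ω, Fx ω ∂M.μ) * (∫⁻ ω, Fy ω ∂M.μ) * (∫⁻ ω, G ω ∂M.μ)) := hfact
    _ ≤ ENNReal.ofReal z ^ γ * (Jtail (β/γ) * Jtail (β/γ) * Jtail (1/γ)) := by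
        apply mul_le_mul_right
        exact mul_le_mul' (mul_le_mul' (M.lintegral_W hβ hγ0 x) (M.lintegral_W hβ hγ0 y))
          (M.lintegral_U hγ0 s(x, y))
    _ = ENNReal.ofReal (lam ^ γ) * Jtail (β/γ) * Jtail (β/γ) * Jtail (1/γ) *
        ENNReal.ofReal (r ^ (-(α * γ))) := by
        rw [hzγ]; ring

end ModelFacts

end Aux

/-- Lemma "good children 0": assume `min {α, βα} > d`. For every
`δ ∈ (0, α(β∧1) - d)` there exist `t₀ ≥ 1` and `c₁ > 0` such that for all `t ≥ t₀` and
all `s ≥ 1`,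
`P[there is an occupied edge in [0,s-1]^d of size larger than t] ≤ c₁ s^d t^{d-α(β∧1)+δ}`. -/
theorem statement_18 (d : ℕ) (β α : ℝ) (hd : 1 ≤ d) (hβ : 0 < β)
    (hα : (d : ℝ) < min α (β * α)) (M : Model d β) (lam : ℝ) (hlam : 0 < lam) :
    ∀ δ : ℝ, 0 < δ → δ < α * min β 1 - d →
      ∃ t₀ : ℝ, 1 ≤ t₀ ∧ ∃ c₁ : ℝ, 0 < c₁ ∧ ∀ t : ℝ, t₀ ≤ t → ∀ s : ℝ, 1 ≤ s →
        M.μ {ω | ∃ x y : V d,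
            (∀ i, (0 : ℝ) ≤ (x i : ℝ) ∧ (x i : ℝ) ≤ s - 1) ∧
            (∀ i, (0 : ℝ) ≤ (y i : ℝ) ∧ (y i : ℝ) ≤ s - 1) ∧
            t < edist x y ∧ occ M lam α x y ω} ≤
          ENNReal.ofReal (c₁ * s ^ (d : ℕ) * t ^ ((d : ℝ) - α * min β 1 + δ)) := by
  intro δ hδ0 hδlt
  haveI := M.hprob
  have hd0 : (0:ℝ) < d := by exact_mod_cast Nat.lt_of_lt_of_le Nat.zero_lt_one hd
  have hdα : (d:ℝ) < α := lt_of_lt_of_le hα (min_le_left _ _)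
  have hα0 : (0:ℝ) < α := hd0.trans hdα
  set m := min β 1 with hm
  have hm1 : m ≤ 1 := min_le_right _ _
  have hmβ : m ≤ β := min_le_left _ _
  have hdm : (d:ℝ) < α * m := by
    rcases le_total β 1 with h | h
    · have hmb : m = β := min_eq_left h
      rw [hmb]
      calc (d:ℝ) < β * α := lt_of_lt_of_le hα (min_le_right _ _)
        _ = α * β := mul_comm _ _
    · have hmb : m = 1 := min_eq_right h
      rw [hmb, mul_one]; exact hdα
  set γ := m - δ/α with hγdef
  have hαγ : α * γ = α * m - δ := by
    rw [hγdef]; field_simp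
  have hq : (d:ℝ) < α * γ := by rw [hαγ]; linarith
  have hγ0 : 0 < γ := by nlinarith
  have hγ1 : γ < 1 := lt_of_lt_of_le (sub_lt_self m (div_pos hδ0 hα0)) hm1
  have hγβ : γ < β := lt_of_lt_of_le (sub_lt_self m (div_pos hδ0 hα0)) hmβ
  set q := α * γ with hqdef
  set Cp := ENNReal.ofReal (lam ^ γ) * Jtail (β/γ) * Jtail (β/γ) * Jtail (1/γ) with hCp
  set Csh := ENNReal.ofReal ((10:ℝ) ^ d) *
    (1 - ENNReal.ofReal ((2:ℝ) ^ ((d:ℝ) - q)))⁻¹ with hCsh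
  have hJβ : Jtail (β/γ) ≠ ⊤ := (Jtail_lt_top ((one_lt_div hγ0).mpr hγβ)).ne
  have hJ1 : Jtail (1/γ) ≠ ⊤ := (Jtail_lt_top ((one_lt_div hγ0).mpr hγ1)).ne
  have hCp_top : Cp ≠ ⊤ := by
    rw [hCp]
    exact ENNReal.mul_ne_top
      (ENNReal.mul_ne_top (ENNReal.mul_ne_top ENNReal.ofReal_ne_top hJβ) hJβ) hJ1
  have hgeo : ENNReal.ofReal ((2:ℝ) ^ ((d:ℝ) - q)) < 1 :=
    ENNReal.ofReal_lt_one.mpr (Real.rpow_lt_one_of_one_lt_of_neg one_lt_two (by linarith))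
  have hCsh_top : Csh ≠ ⊤ := by
    apply ENNReal.mul_ne_top ENNReal.ofReal_ne_top
    rw [ENNReal.inv_ne_top, ne_eq, tsub_eq_zero_iff_le]
    exact not_le.mpr hgeo
  set K := Cp * Csh with hK
  have hK_top : K ≠ ⊤ := ENNReal.mul_ne_top hCp_top hCsh_top
  refine ⟨1, le_refl 1, K.toReal + 1, by positivity, ?_⟩
  intro t ht s hs
  have ht0 : (0:ℝ) < t := lt_of_lt_of_le one_pos ht
  have hexp_eq : (d:ℝ) - q = (d:ℝ) - α * m + δ := by rw [hqdef, hγdef]; field_simp; ring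
  -- union bound
  have hunion : {ω | ∃ x y : V d,
        (∀ i, (0 : ℝ) ≤ (x i : ℝ) ∧ (x i : ℝ) ≤ s - 1) ∧
        (∀ i, (0 : ℝ) ≤ (y i : ℝ) ∧ (y i : ℝ) ≤ s - 1) ∧
        t < edist x y ∧ occ M lam α x y ω}
      ⊆ ⋃ p : V d × V d, {ω | (∀ i, (0 : ℝ) ≤ (p.1 i : ℝ) ∧ (p.1 i : ℝ) ≤ s - 1) ∧
          t < edist p.1 p.2 ∧ occ M lam α p.1 p.2 ω} := by
    intro ω hω
    obtain ⟨x, y, hx, _, hdist, hocc⟩ := hω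
    exact Set.mem_iUnion.mpr ⟨(x, y), hx, hdist, hocc⟩
  have hpair : ∀ p : V d × V d,
      M.μ {ω | (∀ i, (0 : ℝ) ≤ (p.1 i : ℝ) ∧ (p.1 i : ℝ) ≤ s - 1) ∧
          t < edist p.1 p.2 ∧ occ M lam α p.1 p.2 ω}
      ≤ if (∀ i, (0 : ℝ) ≤ (p.1 i : ℝ) ∧ (p.1 i : ℝ) ≤ s - 1) then
          (if t < edist p.1 p.2 then Cp * ENNReal.ofReal (edist p.1 p.2 ^ (-q)) else 0)
        else 0 := by
    rintro ⟨x, y⟩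
    by_cases hbx : (∀ i, (0 : ℝ) ≤ (x i : ℝ) ∧ (x i : ℝ) ≤ s - 1)
    · rw [if_pos hbx]
      by_cases hdist : t < edist x y
      · rw [if_pos hdist]
        have hxy : x ≠ y := by
          intro hcon
          have hzero : edist x y = 0 := by
            rw [hcon]
            unfold InhomLRP.edist
            simp
          rw [hzero] at hdist
          linarith
        calc M.μ {ω | (∀ i, (0 : ℝ) ≤ (x i : ℝ) ∧ (x i : ℝ) ≤ s - 1) ∧
                t < edist x y ∧ occ M lam α x y ω}
            ≤ M.μ {ω | occ M lam α x y ω} := measure_mono (fun ω h => h.2.2)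
          _ ≤ Cp * ENNReal.ofReal (edist x y ^ (-q)) := by
              simpa only [← hqdef, ← hCp] using
                M.pair_bound hβ lam α γ hlam hγ0 hxy
      · rw [if_neg hdist]
        have hempty : {ω | (∀ i, (0 : ℝ) ≤ (x i : ℝ) ∧ (x i : ℝ) ≤ s - 1) ∧
            t < edist x y ∧ occ M lam α x y ω} = ∅ :=
          Set.eq_empty_iff_forall_notMem.mpr fun ω h => hdist h.2.1
        rw [hempty]
        simp
    · rw [if_neg hbx]
      have hempty : {ω | (∀ i, (0 : ℝ) ≤ (x i : ℝ) ∧ (x i : ℝ) ≤ s - 1) ∧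
          t < edist x y ∧ occ M lam α x y ω} = ∅ :=
        Set.eq_empty_iff_forall_notMem.mpr fun ω h => hbx h.1
      rw [hempty]
      simp
  -- sum over the second coordinate
  have hinner : ∀ x : V d,
      (∑' y : V d, if (∀ i, (0 : ℝ) ≤ (x i : ℝ) ∧ (x i : ℝ) ≤ s - 1) then
          (if t < edist x y then Cp * ENNReal.ofReal (edist x y ^ (-q)) else 0)
        else 0)
      ≤ if (∀ i, (0 : ℝ) ≤ (x i : ℝ) ∧ (x i : ℝ) ≤ s - 1) then
          Cp * (Csh * ENNReal.ofReal (t ^ ((d:ℝ) - q))) else 0 := by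
    intro x
    by_cases hbx : (∀ i, (0 : ℝ) ≤ (x i : ℝ) ∧ (x i : ℝ) ≤ s - 1)
    · simp only [if_pos hbx]
      have hrw : ∀ y : V d,
          (if t < edist x y then Cp * ENNReal.ofReal (edist x y ^ (-q)) else 0)
          = Cp * (if t < nrm (x - y) then ENNReal.ofReal (nrm (x - y) ^ (-q)) else 0) := by
        intro y
        rw [edist_eq_nrm]
        split_ifs with h
        · rfl
        · rw [mul_zero]
      calc (∑' y : V d, if t < edist x y then Cp * ENNReal.ofReal (edist x y ^ (-q)) else 0)
          = Cp * ∑' y : V d,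
              (if t < nrm (x - y) then ENNReal.ofReal (nrm (x - y) ^ (-q)) else 0) := by
            rw [tsum_congr hrw, ENNReal.tsum_mul_left]
        _ = Cp * ∑' w : V d, (if t < nrm w then ENNReal.ofReal (nrm w ^ (-q)) else 0) := by
            congr 1
            exact (Equiv.subLeft x).tsum_eq
              (fun w => if t < nrm w then ENNReal.ofReal (nrm w ^ (-q)) else 0)
        _ ≤ Cp * (Csh * ENNReal.ofReal (t ^ ((d:ℝ) - q))) := by
            apply mul_le_mul_right
            have htail := tsum_tail_le (d := d) hq ht
            simpa only [← hCsh, mul_assoc] using htail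
    · simp only [if_neg hbx]
      simp
  -- sum over the first coordinate
  have houter :
      (∑' x : V d, if (∀ i, (0 : ℝ) ≤ (x i : ℝ) ∧ (x i : ℝ) ≤ s - 1) then
          Cp * (Csh * ENNReal.ofReal (t ^ ((d:ℝ) - q))) else 0)
      ≤ ENNReal.ofReal (s ^ (d : ℕ)) * (Cp * (Csh * ENNReal.ofReal (t ^ ((d:ℝ) - q)))) := by
    set Fbox := Fintype.piFinset (fun _ : Fin d => Finset.Icc (0:ℤ) ⌊s-1⌋) with hFbox
    have hsupp : ∀ x : V d, x ∉ Fbox →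
        (if (∀ i, (0 : ℝ) ≤ (x i : ℝ) ∧ (x i : ℝ) ≤ s - 1) then
          Cp * (Csh * ENNReal.ofReal (t ^ ((d:ℝ) - q))) else 0) = 0 := by
      intro x hx
      rw [if_neg]
      intro hbx
      apply hx
      rw [hFbox, Fintype.mem_piFinset]
      intro i
      rw [Finset.mem_Icc]
      constructor
      · exact_mod_cast (hbx i).1
      · exact Int.le_floor.mpr (hbx i).2
    rw [tsum_eq_sum hsupp]
    have hcard : ((Fbox.card : ℕ) : ℝ) ≤ s ^ (d : ℕ) := by
      rw [hFbox, Fintype.card_piFinset]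
      have hs0 : (0:ℝ) < s := lt_of_lt_of_le one_pos hs
      have hfl0 : (0:ℤ) ≤ ⌊s-1⌋ := Int.le_floor.mpr (by simpa using (by linarith : (0:ℝ) ≤ s - 1))
      have hone : ∀ i : Fin d, ((Finset.Icc (0:ℤ) ⌊s-1⌋).card : ℝ) ≤ s := by
        intro i
        rw [Int.card_Icc]
        have h1 : (((⌊s-1⌋ + 1 - 0).toNat : ℤ) : ℝ) = (⌊s-1⌋ : ℝ) + 1 := by
          have : ((⌊s-1⌋ + 1 - 0).toNat : ℤ) = ⌊s-1⌋ + 1 := by omega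
          exact_mod_cast congrArg (fun n : ℤ => (n : ℝ)) this
        rw [show (((⌊s-1⌋ + 1 - 0).toNat : ℕ) : ℝ) = (((⌊s-1⌋ + 1 - 0).toNat : ℤ) : ℝ)
          by push_cast; ring, h1]
        linarith [Int.floor_le (s-1)]
      calc ((∏ i : Fin d, (Finset.Icc (0:ℤ) ⌊s-1⌋).card : ℕ) : ℝ)
          = ∏ i : Fin d, ((Finset.Icc (0:ℤ) ⌊s-1⌋).card : ℝ) := by push_cast; ring
        _ ≤ ∏ _i : Fin d, s := Finset.prod_le_prod (fun i _ => by positivity) (fun i _ => hone i)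
        _ = s ^ (d : ℕ) := by simp [Finset.prod_const]
    calc (∑ x ∈ Fbox, if (∀ i, (0 : ℝ) ≤ (x i : ℝ) ∧ (x i : ℝ) ≤ s - 1) then
            Cp * (Csh * ENNReal.ofReal (t ^ ((d:ℝ) - q))) else 0)
        ≤ ∑ _x ∈ Fbox, Cp * (Csh * ENNReal.ofReal (t ^ ((d:ℝ) - q))) := by
          apply Finset.sum_le_sum
          intro x _
          split_ifs
          exacts [le_rfl, zero_le]
      _ = Fbox.card * (Cp * (Csh * ENNReal.ofReal (t ^ ((d:ℝ) - q)))) := by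
          rw [Finset.sum_const, nsmul_eq_mul]
      _ ≤ ENNReal.ofReal (s ^ (d : ℕ)) * (Cp * (Csh * ENNReal.ofReal (t ^ ((d:ℝ) - q)))) := by
          apply mul_le_mul_left
          rw [← ENNReal.ofReal_natCast]
          exact ENNReal.ofReal_le_ofReal hcard
  -- put everything together
  have hKle : K ≤ ENNReal.ofReal (K.toReal + 1) := by
    conv_lhs => rw [← ENNReal.ofReal_toReal hK_top]
    exact ENNReal.ofReal_le_ofReal (by linarith [ENNReal.toReal_nonneg (a := K)])
  calc M.μ {ω | ∃ x y : V d,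
        (∀ i, (0 : ℝ) ≤ (x i : ℝ) ∧ (x i : ℝ) ≤ s - 1) ∧
        (∀ i, (0 : ℝ) ≤ (y i : ℝ) ∧ (y i : ℝ) ≤ s - 1) ∧
        t < edist x y ∧ occ M lam α x y ω}
      ≤ M.μ (⋃ p : V d × V d, {ω | (∀ i, (0 : ℝ) ≤ (p.1 i : ℝ) ∧ (p.1 i : ℝ) ≤ s - 1) ∧
          t < edist p.1 p.2 ∧ occ M lam α p.1 p.2 ω}) := measure_mono hunion
    _ ≤ ∑' p : V d × V d, M.μ {ω | (∀ i, (0 : ℝ) ≤ (p.1 i : ℝ) ∧ (p.1 i : ℝ) ≤ s - 1) ∧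
          t < edist p.1 p.2 ∧ occ M lam α p.1 p.2 ω} := measure_iUnion_le _
    _ ≤ ∑' p : V d × V d, (if (∀ i, (0 : ℝ) ≤ (p.1 i : ℝ) ∧ (p.1 i : ℝ) ≤ s - 1) then
          (if t < edist p.1 p.2 then Cp * ENNReal.ofReal (edist p.1 p.2 ^ (-q)) else 0)
        else 0) := ENNReal.tsum_le_tsum hpair
    _ = ∑' x : V d, ∑' y : V d, (if (∀ i, (0 : ℝ) ≤ (x i : ℝ) ∧ (x i : ℝ) ≤ s - 1) then
          (if t < edist x y then Cp * ENNReal.ofReal (edist x y ^ (-q)) else 0)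
        else 0) := ENNReal.tsum_prod'
    _ ≤ ∑' x : V d, (if (∀ i, (0 : ℝ) ≤ (x i : ℝ) ∧ (x i : ℝ) ≤ s - 1) then
          Cp * (Csh * ENNReal.ofReal (t ^ ((d:ℝ) - q))) else 0) :=
        ENNReal.tsum_le_tsum hinner
    _ ≤ ENNReal.ofReal (s ^ (d : ℕ)) * (Cp * (Csh * ENNReal.ofReal (t ^ ((d:ℝ) - q)))) := houter
    _ = K * (ENNReal.ofReal (s ^ (d : ℕ)) * ENNReal.ofReal (t ^ ((d:ℝ) - q))) := by
        rw [hK]; ring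
    _ ≤ ENNReal.ofReal (K.toReal + 1) *
          (ENNReal.ofReal (s ^ (d : ℕ)) * ENNReal.ofReal (t ^ ((d:ℝ) - q))) :=
        mul_le_mul_left hKle _
    _ = ENNReal.ofReal ((K.toReal + 1) * s ^ (d : ℕ) * t ^ ((d : ℝ) - α * m + δ)) := by
        rw [← hexp_eq,
          ENNReal.ofReal_mul (by positivity : (0:ℝ) ≤ (K.toReal + 1) * s ^ (d : ℕ)),
          ENNReal.ofReal_mul (by positivity : (0:ℝ) ≤ K.toReal + 1)]
        ring

end InhomLRP
end
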